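/- arXiv:2009.06331 — 9 statements merged into one kernel-verified Lean document; each statement's English description precedes it below -/
import Mathlib

section
/- If a digraph D contains a spanning subdigraph that is strong and bipartite, then the proper connection number of D is at most 2. -/
/-!
Common definitions: digraphs as adjacency relations, directed walks and paths,
arc-colourings, proper connection and proper-walk connection numbers,
strong digraphs, bipartite digraphs, Hamiltonian cycles, chords,
circulant digraphs and strong 2-partitions.
-/

namespace PCDigraph

variable {V : Type*}

/-- A directed walk from `u` to `v` in the digraph with adjacency relation `Adj`. -/
inductive DWalk (Adj : V → V → Prop) : V → V → Type _
  | nil {v : V} : DWalk Adj v v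
  | cons {u v w : V} (h : Adj u v) (p : DWalk Adj v w) : DWalk Adj u w

namespace DWalk

variable {Adj : V → V → Prop}

/-- The list of arcs of a directed walk. -/
def arcs : ∀ {u v : V}, DWalk Adj u v → List (V × V)
  | _, _, .nil => []
  | u, _, .cons (v := w) _ p => (u, w) :: p.arcs

/-- The list of vertices visited by a directed walk. -/
def support : ∀ {u v : V}, DWalk Adj u v → List V
  | u, _, .nil => [u]
  | u, _, .cons _ p => u :: p.support

/-- A directed walk is a (directed) path if it visits no vertex twice. -/
def IsPath {u v : V} (p : DWalk Adj u v) : Prop := p.support.Nodup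

end DWalk

/-- A directed walk is properly coloured under the arc-colouring `c` if no two
consecutive arcs of the walk receive the same colour. -/
def ProperlyColoured {Adj : V → V → Prop} (c : V → V → ℕ) {u v : V}
    (p : DWalk Adj u v) : Prop :=
  (p.arcs.map fun e => c e.1 e.2).Chain' (· ≠ ·)

/-- `c` is an arc-colouring using colours in `{1, …, k}` that makes the digraph
properly connected: between every ordered pair of distinct vertices there is a
properly coloured directed path. -/
def IsPCColouring (Adj : V → V → Prop) (k : ℕ) (c : V → V → ℕ) : Prop :=
  (∀ u v : V, Adj u v → c u v ∈ Finset.Icc 1 k) ∧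
    ∀ u v : V, u ≠ v → ∃ p : DWalk Adj u v, p.IsPath ∧ ProperlyColoured c p

/-- `c` is an arc-colouring using colours in `{1, …, k}` that makes the digraph
properly-walk connected: between every ordered pair of distinct vertices there
is a properly coloured directed walk. -/
def IsWCColouring (Adj : V → V → Prop) (k : ℕ) (c : V → V → ℕ) : Prop :=
  (∀ u v : V, Adj u v → c u v ∈ Finset.Icc 1 k) ∧
    ∀ u v : V, u ≠ v → ∃ p : DWalk Adj u v, ProperlyColoured c p

/-- The proper connection number of a digraph. -/
noncomputable def pc (Adj : V → V → Prop) : ℕ :=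
  sInf {k : ℕ | ∃ c : V → V → ℕ, IsPCColouring Adj k c}

/-- The proper-walk connection number of a digraph. -/
noncomputable def wc (Adj : V → V → Prop) : ℕ :=
  sInf {k : ℕ | ∃ c : V → V → ℕ, IsWCColouring Adj k c}

/-- A digraph is strong if for every ordered pair of vertices there is a
directed path from the first to the second. -/
def Strong (Adj : V → V → Prop) : Prop :=
  ∀ u v : V, ∃ p : DWalk Adj u v, p.IsPath

/-- A digraph is bipartite if its vertex set can be partitioned into two sets
such that every arc joins vertices from different sets. -/
def Bipartite (Adj : V → V → Prop) : Prop :=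
  ∃ V₁ V₂ : Set V, V₁ ∪ V₂ = Set.univ ∧ Disjoint V₁ V₂ ∧
    ∀ u v : V, Adj u v → (u ∈ V₁ ∧ v ∈ V₂) ∨ (u ∈ V₂ ∧ v ∈ V₁)

/-- The out-degree of a vertex: the number of arcs with tail at that vertex. -/
noncomputable def outDeg (Adj : V → V → Prop) (v : V) : ℕ := {w | Adj v w}.ncard

/-- The in-degree of a vertex: the number of arcs with head at that vertex. -/
noncomputable def inDeg (Adj : V → V → Prop) (v : V) : ℕ := {w | Adj w v}.ncard

/-- `x` enumerates a Hamiltonian cycle of the digraph: it is a bijective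
enumeration of the vertices, consecutive vertices (cyclically) being joined
by an arc. -/
def IsHamCycle [Fintype V] (Adj : V → V → Prop)
    (x : ZMod (Fintype.card V) → V) : Prop :=
  Function.Bijective x ∧ ∀ i : ZMod (Fintype.card V), Adj (x i) (x (i + 1))

/-- A digraph is Hamiltonian if it has a Hamiltonian cycle. -/
def Hamiltonian [Fintype V] (Adj : V → V → Prop) : Prop :=
  ∃ x : ZMod (Fintype.card V) → V, IsHamCycle Adj x

/-- For a Hamiltonian cycle enumerated by `x`, the arc `x p → x q` is a chord
if it is not an arc of the cycle, i.e. `q ≠ p + 1`. -/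
def IsChord [Fintype V] (Adj : V → V → Prop)
    (x : ZMod (Fintype.card V) → V) (p q : ZMod (Fintype.card V)) : Prop :=
  Adj (x p) (x q) ∧ q ≠ p + 1

/-- The length of the chord from `x p` to `x q`: the length of the directed
path from `x p` to `x q` along the cycle. -/
def chordLength [Fintype V] (p q : ZMod (Fintype.card V)) : ℕ := (q - p).val

/-- The circulant digraph `C_n(S)`, with vertex set `ZMod n` and an arc from
`i` to `j` whenever `j - i ≡ s (mod n)` for some `s ∈ S`. -/
def circulantAdj (n : ℕ) (S : Finset ℕ) : ZMod n → ZMod n → Prop :=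
  fun i j => ∃ s ∈ S, j - i = (s : ZMod n)

/-- A strong 2-partition of a digraph: a partition of the vertex set into two
parts such that the spanning bipartite subdigraph induced by the arcs having
one end in each part is strong. -/
def HasStrongTwoPartition (Adj : V → V → Prop) : Prop :=
  ∃ V₁ V₂ : Set V, V₁ ∪ V₂ = Set.univ ∧ Disjoint V₁ V₂ ∧
    Strong (fun u v => Adj u v ∧ ((u ∈ V₁ ∧ v ∈ V₂) ∨ (u ∈ V₂ ∧ v ∈ V₁)))

end PCDigraph

open PCDigraph

namespace PCDigraph

variable {Adj Adj' : V → V → Prop}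

/-- Lift a walk along an inclusion of adjacency relations. -/
def DWalk.lift (h : ∀ u v, Adj' u v → Adj u v) :
    ∀ {u v : V}, DWalk Adj' u v → DWalk Adj u v
  | _, _, .nil => .nil
  | _, _, .cons ha p => .cons (h _ _ ha) (p.lift h)

lemma DWalk.lift_arcs (h : ∀ u v, Adj' u v → Adj u v) {u v : V}
    (p : DWalk Adj' u v) : (p.lift h).arcs = p.arcs := by
  induction p with
  | nil => rfl
  | cons ha p ih => simp [DWalk.lift, DWalk.arcs, ih]

lemma DWalk.lift_support (h : ∀ u v, Adj' u v → Adj u v) {u v : V}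
    (p : DWalk Adj' u v) : (p.lift h).support = p.support := by
  induction p with
  | nil => rfl
  | cons ha p ih => simp [DWalk.lift, DWalk.support, ih]

open Classical in
lemma chain_of_bipartite {V₁ V₂ : Set V} (hdis : Disjoint V₁ V₂)
    (hbip : ∀ u v, Adj' u v → (u ∈ V₁ ∧ v ∈ V₂) ∨ (u ∈ V₂ ∧ v ∈ V₁))
    {u v : V} (p : DWalk Adj' u v) :
    (p.arcs.map fun e => if e.1 ∈ V₁ then 1 else 2).Chain' (· ≠ ·) := by
  induction p with
  | nil => simp [DWalk.arcs, List.Chain']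
  | cons ha p ih =>
    cases p with
    | nil => simp [DWalk.arcs, List.Chain']
    | cons hb q =>
      refine List.IsChain.cons_cons ?_ ih
      have h1 : (_ ∈ V₁ ∧ _ ∈ V₂) ∨ _ := hbip _ _ ha
      rcases h1 with ⟨hu, hw⟩ | ⟨hu, hw⟩
      · have hw1 : _ ∉ V₁ := fun hx => hdis.ne_of_mem hx hw rfl
        simp [hu, hw1]
      · have hu1 : _ ∉ V₁ := fun hx => hdis.ne_of_mem hx hu rfl
        have hw1 : _ ∈ V₁ := hw
        simp [hu1, hw1]

end PCDigraph

/-- If a digraph `D` contains a spanning subdigraph that is strong and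
bipartite, then the proper connection number of `D` is at most `2`. -/
theorem pc_le_two_of_strong_bipartite_spanning {V : Type*} (Adj : V → V → Prop)
    (hloopless : ∀ v : V, ¬ Adj v v)
    (hsub : ∃ Adj' : V → V → Prop,
      (∀ u v : V, Adj' u v → Adj u v) ∧ Strong Adj' ∧ Bipartite Adj') :
    pc Adj ≤ 2 := by
  classical
  obtain ⟨Adj', hincl, hstrong, V₁, V₂, hcov, hdis, hbip⟩ := hsub
  apply Nat.sInf_le
  refine ⟨fun u v => if u ∈ V₁ then 1 else 2, ?_, ?_⟩
  · intro u v _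
    simp only []
    split <;> simp
  · intro u v _
    obtain ⟨p, hp⟩ := hstrong u v
    refine ⟨p.lift hincl, ?_, ?_⟩
    · unfold DWalk.IsPath
      rw [DWalk.lift_support]
      exact hp
    · unfold ProperlyColoured
      rw [DWalk.lift_arcs]
      exact chain_of_bipartite hdis hbip p
end

section
/- Let D be a strong digraph. If there is a partition of the vertex set V(D) = V_1 ∪ V_2 with V_1 ∩ V_2 = ∅ such that the induced subdigraph D[V_1] is strong and bipartite, and V_2 is an independent set of vertices (no arc of D joins two vertices of V_2), then the proper connection number of D is at most 2. -/
open PCDigraph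


namespace PCAux

open PCDigraph

variable {V : Type*} {Adj : V → V → Prop}

lemma start_mem_support : ∀ {u v : V} (p : DWalk Adj u v), u ∈ p.support
  | _, _, .nil => by simp [DWalk.support]
  | _, _, .cons _ p => by simp [DWalk.support]

lemma end_mem_support : ∀ {u v : V} (p : DWalk Adj u v), v ∈ p.support
  | _, _, .nil => by simp [DWalk.support]
  | _, _, .cons _ p => by
      simp only [DWalk.support, List.mem_cons]
      exact Or.inr (end_mem_support p)

lemma drop : ∀ {a v : V} (p : DWalk Adj a v) (w : V), w ∈ p.support →
    ∃ q : DWalk Adj w v, q.support.Sublist p.support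
  | _, _, .nil, w, hw => by
      simp [DWalk.support] at hw
      subst hw
      exact ⟨.nil, List.Sublist.refl _⟩
  | a, v, .cons h p, w, hw => by
      simp only [DWalk.support, List.mem_cons] at hw
      rcases hw with rfl | hw'
      · exact ⟨.cons h p, List.Sublist.refl _⟩
      · obtain ⟨q, hq⟩ := drop p w hw'
        exact ⟨q, hq.trans (List.sublist_cons_self _ _)⟩

lemma dedup : ∀ {u v : V} (p : DWalk Adj u v),
    ∃ q : DWalk Adj u v, q.IsPath ∧ ∀ w ∈ q.support, w ∈ p.support
  | _, _, .nil => ⟨.nil, by simp [DWalk.IsPath, DWalk.support], by simp⟩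
  | u, v, .cons h p => by
      classical
      obtain ⟨q', hq'path, hq'sub⟩ := dedup p
      by_cases hu : u ∈ q'.support
      · obtain ⟨q, hq⟩ := drop q' u hu
        refine ⟨q, hq.nodup hq'path, fun w hw => ?_⟩
        simp only [DWalk.support, List.mem_cons]
        exact Or.inr (hq'sub w (hq.subset hw))
      · refine ⟨.cons h q', ?_, fun w hw => ?_⟩
        · simpa [DWalk.IsPath, DWalk.support, hu] using hq'path
        · simp only [DWalk.support, List.mem_cons] at hw ⊢
          rcases hw with rfl | hw'
          · exact Or.inl rfl
          · exact Or.inr (hq'sub w hw')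

lemma append : ∀ {u a v : V} (p : DWalk Adj u a) (q : DWalk Adj a v),
    ∃ r : DWalk Adj u v, ∀ w ∈ r.support, w ∈ p.support ∨ w ∈ q.support
  | _, _, _, .nil, q => ⟨q, fun w hw => Or.inr hw⟩
  | _, _, _, .cons h p, q => by
      obtain ⟨r, hr⟩ := append p q
      refine ⟨.cons h r, fun w hw => ?_⟩
      simp only [DWalk.support, List.mem_cons] at hw ⊢
      rcases hw with rfl | hw'
      · exact Or.inl (Or.inl rfl)
      · rcases hr w hw' with h1 | h2
        · exact Or.inl (Or.inr h1)
        · exact Or.inr h2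

lemma subwalk_to_walk {V₁ : Set V} :
    ∀ {a b : V₁} (_ : DWalk (fun x y : V₁ => Adj x.1 y.1) a b),
      ∃ q : DWalk Adj a.1 b.1, ∀ w ∈ q.support, w ∈ V₁
  | a, _, .nil => ⟨.nil, by simp [DWalk.support]⟩
  | a, b, .cons h p => by
      obtain ⟨q, hq⟩ := subwalk_to_walk p
      refine ⟨.cons h q, fun w hw => ?_⟩
      simp only [DWalk.support, List.mem_cons] at hw
      rcases hw with rfl | hw'
      · exact a.2
      · exact hq w hw'

lemma interior_fix {V₁ V₂ : Set V}
    (hloopless : ∀ v : V, ¬ Adj v v)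
    (hcov : V₁ ∪ V₂ = Set.univ)
    (hs₁ : Strong (fun a b : V₁ => Adj a.1 b.1))
    (hind : ∀ u ∈ V₂, ∀ v ∈ V₂, ¬ Adj u v) :
    ∀ {u v : V}, (DWalk Adj u v) →
      ∃ q : DWalk Adj u v, ∀ w ∈ q.support, w = u ∨ w = v ∨ w ∈ V₁ := by
  classical
  have hmem₂ : ∀ w : V, w ∉ V₁ → w ∈ V₂ := by
    intro w hw
    have : w ∈ V₁ ∪ V₂ := hcov ▸ Set.mem_univ w
    rcases this with h | h
    · exact absurd h hw
    · exact h
  intro u v p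
  induction p with
  | nil => exact ⟨.nil, by simp [DWalk.support]⟩
  | @cons u a v h p' ih =>
    by_cases ha : a ∈ V₁
    · obtain ⟨q', hq'⟩ := ih
      refine ⟨.cons h q', fun w hw => ?_⟩
      simp only [DWalk.support, List.mem_cons] at hw
      rcases hw with rfl | hw'
      · exact Or.inl rfl
      · rcases hq' w hw' with rfl | h2 | h3
        · exact Or.inr (Or.inr ha)
        · exact Or.inr (Or.inl h2)
        · exact Or.inr (Or.inr h3)
    · have ha₂ : a ∈ V₂ := hmem₂ a ha
      have hu₁ : u ∈ V₁ := by
        by_contra hu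
        exact hind u (hmem₂ u hu) a ha₂ h
      by_cases hav : a = v
      · subst hav
        refine ⟨.cons h .nil, fun w hw => ?_⟩
        simp only [DWalk.support, List.mem_cons, List.not_mem_nil, or_false] at hw
        rcases hw with rfl | rfl
        · exact Or.inl rfl
        · exact Or.inr (Or.inl rfl)
      · obtain ⟨q', hq'⟩ := ih
        obtain ⟨q'', hq''path, hq''sub⟩ := dedup q'
        cases q'' with
        | nil => exact absurd rfl hav
        | @cons _ b _ h₂ r =>
          have hbr : b ∈ r.support := start_mem_support r
          have hanr : a ∉ r.support := by
            simp only [DWalk.IsPath, DWalk.support, List.nodup_cons] at hq''path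
            exact hq''path.1
          have hb₁ : b ∈ V₁ := by
            have hbmem : b ∈ (DWalk.cons h₂ r).support := by
              simp only [DWalk.support, List.mem_cons]; exact Or.inr hbr
            rcases hq' b (hq''sub b hbmem) with rfl | rfl | h3
            · exact absurd hbr hanr
            · by_cases hv₁ : b ∈ V₁
              · exact hv₁
              · exact absurd h₂ (hind a ha₂ b (hmem₂ b hv₁))
            · exact h3
          obtain ⟨P, _⟩ := hs₁ ⟨u, hu₁⟩ ⟨b, hb₁⟩
          obtain ⟨s, hs⟩ := subwalk_to_walk P
          obtain ⟨t, ht⟩ := append s r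
          refine ⟨t, fun w hw => ?_⟩
          rcases ht w hw with h1 | h2
          · exact Or.inr (Or.inr (hs w h1))
          · have hwq : w ∈ (DWalk.cons h₂ r).support := by
              simp only [DWalk.support, List.mem_cons]; exact Or.inr h2
            rcases hq' w (hq''sub w hwq) with rfl | h4 | h5
            · exact absurd h2 hanr
            · exact Or.inr (Or.inl h4)
            · exact Or.inr (Or.inr h5)

lemma arcs_head : ∀ {a v : V} (p : DWalk Adj a v) (pr : V × V),
    pr ∈ p.arcs.head? → pr.1 = a ∧ Adj pr.1 pr.2
  | _, _, .nil, pr, h => by simp [DWalk.arcs] at h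
  | _, _, .cons h p, pr, hpr => by
      simp only [DWalk.arcs, List.head?_cons, Option.mem_def, Option.some.injEq] at hpr
      subst hpr
      exact ⟨rfl, h⟩

lemma end_mem_tail : ∀ {a v : V} (p : DWalk Adj a v), p.arcs ≠ [] → v ∈ p.support.tail
  | _, _, .nil, h => absurd rfl h
  | _, _, .cons _ p, _ => by
      simp only [DWalk.support, List.tail_cons]
      exact end_mem_support p

lemma support_eq_cons : ∀ {a v : V} (p : DWalk Adj a v), p.support = a :: p.support.tail
  | _, _, .nil => rfl
  | _, _, .cons _ _ => rfl

lemma pc_of_interior (c : V → V → ℕ) (V₁ : Set V)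
    (hpair : ∀ x a y : V, a ∈ V₁ → Adj x a → Adj a y → c x a ≠ c a y)
    {u v : V} (p : DWalk Adj u v) (hp : p.IsPath)
    (hi : ∀ w ∈ p.support, w = u ∨ w = v ∨ w ∈ V₁) : ProperlyColoured c p := by
  induction p with
  | nil => simp [ProperlyColoured, DWalk.arcs, List.Chain']
  | @cons u a v h p' ih =>
    simp only [DWalk.IsPath, DWalk.support, List.nodup_cons] at hp
    have hunotp' : u ∉ p'.support := hp.1
    have hint' : ∀ w ∈ p'.support, w = a ∨ w = v ∨ w ∈ V₁ := by
      intro w hw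
      rcases hi w (by simp only [DWalk.support, List.mem_cons]; exact Or.inr hw) with
        rfl | h4 | h5
      · exact absurd hw hunotp'
      · exact Or.inr (Or.inl h4)
      · exact Or.inr (Or.inr h5)
    have hrest := ih hp.2 hint'
    simp only [ProperlyColoured, DWalk.arcs, List.map_cons, List.Chain', List.isChain_cons]
    refine ⟨?_, hrest⟩
    intro col hcol
    rw [List.head?_map] at hcol
    obtain ⟨pr, hpr, rfl⟩ := Option.mem_map.mp hcol
    obtain ⟨hpr1, hpradj⟩ := arcs_head p' pr hpr
    have harcs : p'.arcs ≠ [] := by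
      intro hnil
      rw [hnil] at hpr
      simp at hpr
    have ha₁ : a ∈ V₁ := by
      have hamem : a ∈ (DWalk.cons h p').support := by
        rw [DWalk.support, support_eq_cons p']
        simp
      rcases hi a hamem with rfl | rfl | h3
      · exact absurd (start_mem_support p') hunotp'
      · exfalso
        have hv : a ∈ p'.support.tail := end_mem_tail p' harcs
        have : p'.support.Nodup := hp.2
        rw [support_eq_cons p', List.nodup_cons] at this
        exact this.1 hv
      · exact h3
    have : c u a ≠ c a pr.2 := hpair u a pr.2 ha₁ h (hpr1 ▸ hpradj)
    rw [hpr1]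
    exact this

end PCAux

/-- Let `D` be a strong digraph. If there is a partition `V(D) = V₁ ∪ V₂`,
with `V₁ ∩ V₂ = ∅`, such that the induced subdigraph `D[V₁]` is strong and
bipartite, and `V₂` is an independent set of vertices, then the proper
connection number of `D` is at most `2`. -/
theorem pc_le_two_of_partition {V : Type*} (Adj : V → V → Prop)
    (hloopless : ∀ v : V, ¬ Adj v v) (hstrong : Strong Adj)
    (V₁ V₂ : Set V) (hcover : V₁ ∪ V₂ = Set.univ) (hdisj : Disjoint V₁ V₂)
    (hstrong₁ : Strong (fun a b : V₁ => Adj a.1 b.1))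
    (hbip₁ : Bipartite (fun a b : V₁ => Adj a.1 b.1))
    (hind : ∀ u ∈ V₂, ∀ v ∈ V₂, ¬ Adj u v) :
    pc Adj ≤ 2 := by
  classical
  obtain ⟨A, B, hABu, hABd, hAB⟩ := hbip₁
  set sA : V → Prop := fun w => ∃ h : w ∈ V₁, (⟨w, h⟩ : V₁) ∈ A with hsAdef
  set c : V → V → ℕ := fun x y =>
    if y ∈ V₁ then (if sA y then 2 else 1) else (if sA x then 1 else 2) with hcdef
  have hsA_iff : ∀ (w : V) (hw : w ∈ V₁), sA w ↔ (⟨w, hw⟩ : V₁) ∈ A := by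
    intro w hw
    constructor
    · rintro ⟨h', hA⟩; exact hA
    · intro hA; exact ⟨hw, hA⟩
  have hpair : ∀ x a y : V, a ∈ V₁ → Adj x a → Adj a y → c x a ≠ c a y := by
    intro x a y ha hxa hay
    have hca : c x a = if sA a then 2 else 1 := by simp [hcdef, ha]
    by_cases hy : y ∈ V₁
    · have hcay : c a y = if sA y then 2 else 1 := by simp [hcdef, hy]
      rcases hAB ⟨a, ha⟩ ⟨y, hy⟩ hay with ⟨h1, h2⟩ | ⟨h1, h2⟩
      · have hsa : sA a := (hsA_iff a ha).mpr h1
        have hsy : ¬ sA y := by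
          intro hsy
          exact Set.disjoint_left.mp hABd ((hsA_iff y hy).mp hsy) h2
        rw [hca, hcay, if_pos hsa, if_neg hsy]
        decide
      · have hsa : ¬ sA a := by
          intro hsa
          exact Set.disjoint_left.mp hABd ((hsA_iff a ha).mp hsa) h1
        have hsy : sA y := (hsA_iff y hy).mpr h2
        rw [hca, hcay, if_neg hsa, if_pos hsy]
        decide
    · have hcay : c a y = if sA a then 1 else 2 := by simp [hcdef, hy]
      by_cases hsa : sA a
      · rw [hca, hcay, if_pos hsa, if_pos hsa]; decide
      · rw [hca, hcay, if_neg hsa, if_neg hsa]; decide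
  have hmem : 2 ∈ {k : ℕ | ∃ c : V → V → ℕ, IsPCColouring Adj k c} := by
    refine ⟨c, ?_, ?_⟩
    · intro u v _
      simp only [hcdef, Finset.mem_Icc]
      split <;> split <;> omega
    · intro u v huv
      obtain ⟨p, _⟩ := hstrong u v
      obtain ⟨q, hq⟩ := PCAux.interior_fix hloopless hcover hstrong₁ hind p
      obtain ⟨q', hq'path, hq'sub⟩ := PCAux.dedup q
      exact ⟨q', hq'path,
        PCAux.pc_of_interior c V₁ hpair q' hq'path fun w hw => hq w (hq'sub w hw)⟩
  exact Nat.sInf_le hmem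
end

section
/- If a digraph D has a spanning subdigraph H that is strong and admits a partition of its vertex set V(H) = V_1 ∪ V_2 with V_1 ∩ V_2 = ∅ such that H[V_1] is strong and bipartite and V_2 is an independent set of vertices of H, then the proper connection number of D is at most 2. -/
namespace PCDigraph
namespace DWalk

variable {V V' : Type*} {Adj : V → V → Prop} {Adj' : V' → V' → Prop}

/-- Map a walk along a graph homomorphism. -/
def mapW (f : V → V') (hf : ∀ a b, Adj a b → Adj' (f a) (f b)) :
    ∀ {u v : V}, DWalk Adj u v → DWalk Adj' (f u) (f v)
  | _, _, .nil => .nil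
  | _, _, .cons h p => .cons (hf _ _ h) (mapW f hf p)

@[simp] lemma arcs_mapW (f : V → V') (hf : ∀ a b, Adj a b → Adj' (f a) (f b)) :
    ∀ {u v : V} (p : DWalk Adj u v),
      (mapW f hf p).arcs = p.arcs.map (fun e => (f e.1, f e.2))
  | _, _, .nil => rfl
  | _, _, .cons h p => by simp [mapW, arcs, arcs_mapW f hf p]

@[simp] lemma support_mapW (f : V → V') (hf : ∀ a b, Adj a b → Adj' (f a) (f b)) :
    ∀ {u v : V} (p : DWalk Adj u v),
      (mapW f hf p).support = p.support.map f
  | _, _, .nil => rfl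
  | _, _, .cons h p => by simp [mapW, support, support_mapW f hf p]

/-- Append one arc at the end of a walk. -/
def snoc : ∀ {u v w : V}, DWalk Adj u v → Adj v w → DWalk Adj u w
  | _, _, _, .nil, h => .cons h .nil
  | _, _, _, .cons h' p, h => .cons h' (snoc p h)

@[simp] lemma arcs_snoc : ∀ {u v w : V} (p : DWalk Adj u v) (h : Adj v w),
    (snoc p h).arcs = p.arcs ++ [(v, w)]
  | _, _, _, .nil, h => rfl
  | _, _, _, .cons h' p, h => by simp [snoc, arcs, arcs_snoc p h]

@[simp] lemma support_snoc : ∀ {u v w : V} (p : DWalk Adj u v) (h : Adj v w),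
    (snoc p h).support = p.support ++ [w]
  | _, _, _, .nil, h => rfl
  | _, _, _, .cons h' p, h => by simp [snoc, support, support_snoc p h]

lemma eq_of_arcs_eq_nil : ∀ {u v : V} (p : DWalk Adj u v), p.arcs = [] → u = v
  | _, _, .nil, _ => rfl
  | _, _, .cons _ _, h => by simp [arcs] at h

lemma exists_adj_last : ∀ {u v : V}, DWalk Adj u v → u ≠ v → ∃ b, Adj b v
  | _, _, .nil, h => absurd rfl h
  | u, v, .cons (v := x) h p, hne => by
    by_cases hxv : x = v
    · exact ⟨u, hxv ▸ h⟩
    · exact exists_adj_last p hxv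

lemma exists_adj_head {u v : V} (p : DWalk Adj u v) (h : u ≠ v) : ∃ c, Adj u c := by
  cases p with
  | nil => exact absurd rfl h
  | cons h' p => exact ⟨_, h'⟩

/-- Key alternation lemma: if every arc gets the colour `f` of its tail,
`f` flips along arcs, and `f a = g b` for each arc `a → b`, then the colour
list of any walk is properly alternating, starts with `f u` and ends with
`g v`. -/
lemma colour_key {col : V' → V' → ℕ} {f g : V' → ℕ}
    (hcol : ∀ a b, Adj' a b → col a b = f a)
    (hfg : ∀ a b, Adj' a b → f a = g b)
    (halt : ∀ a b, Adj' a b → f a ≠ f b)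
    {u v : V'} (p : DWalk Adj' u v) :
    (p.arcs.map fun e => col e.1 e.2).Chain' (· ≠ ·) ∧
    (∀ x ∈ (p.arcs.map fun e => col e.1 e.2).head?, x = f u) ∧
    (∀ x ∈ (p.arcs.map fun e => col e.1 e.2).getLast?, x = g v) := by
  induction p with
  | nil => simp [DWalk.arcs]; exact List.isChain_nil
  | @cons u x v h q ih =>
    obtain ⟨ih1, ih2, ih3⟩ := ih
    have harcs : (DWalk.cons h q).arcs.map (fun e => col e.1 e.2)
        = col u x :: (q.arcs.map fun e => col e.1 e.2) := by
      simp [DWalk.arcs]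
    refine ⟨?_, ?_, ?_⟩
    · rw [harcs]
      refine List.isChain_cons.2 ⟨?_, ih1⟩
      intro y hy
      rw [ih2 y hy, hcol _ _ h]
      exact halt _ _ h
    · intro y hy
      rw [harcs] at hy
      simp at hy
      rw [← hy, hcol _ _ h]
    · intro y hy
      rw [harcs] at hy
      rcases hq : q.arcs.map (fun e => col e.1 e.2) with _ | ⟨z, l⟩
      · rw [hq] at hy
        simp at hy
        have hxv : x = v :=
          eq_of_arcs_eq_nil q (by simpa using hq)
        rw [← hy, hcol _ _ h, hfg _ _ h, hxv]
      · rw [hq] at hy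
        rw [List.getLast?_cons_cons] at hy
        exact ih3 y (hq ▸ hy)

end DWalk
end PCDigraph

open PCDigraph

/-- If a digraph `D` has a spanning subdigraph `H` that is strong and admits a
partition `V(H) = V₁ ∪ V₂`, with `V₁ ∩ V₂ = ∅`, such that `H[V₁]` is strong
and bipartite and `V₂` is an independent set of vertices of `H`, then the
proper connection number of `D` is at most `2`. -/
theorem pc_le_two_of_spanning_partition {V : Type*} (Adj : V → V → Prop)
    (hloopless : ∀ v : V, ¬ Adj v v)
    (hsub : ∃ AdjH : V → V → Prop,
      (∀ u v : V, AdjH u v → Adj u v) ∧ Strong AdjH ∧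
        ∃ V₁ V₂ : Set V, V₁ ∪ V₂ = Set.univ ∧ Disjoint V₁ V₂ ∧
          Strong (fun a b : V₁ => AdjH a.1 b.1) ∧
          Bipartite (fun a b : V₁ => AdjH a.1 b.1) ∧
          ∀ u ∈ V₂, ∀ v ∈ V₂, ¬ AdjH u v) :
    pc Adj ≤ 2 := by
  classical
  obtain ⟨AdjH, hsubset, hstrongH, V₁, V₂, hunion, hdisj, hstrong1, hbip, hind⟩ := hsub
  obtain ⟨A, B, hABu, hABd, hAB⟩ := hbip
  set A' : Set V := {x | ∃ h : x ∈ V₁, (⟨x, h⟩ : V₁) ∈ A} with hA'def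
  set f : V → ℕ := fun x => if x ∈ A' then 1 else 2 with hfdef
  set g : V → ℕ := fun x => if x ∈ A' then 2 else 1 with hgdef
  set col : V → V → ℕ := fun u v => if u ∈ V₂ then g v else f u with hcoldef
  have hmem : ∀ x : V, x ∈ V₁ ∨ x ∈ V₂ := by
    intro x
    have : x ∈ V₁ ∪ V₂ := hunion ▸ Set.mem_univ x
    exact this
  have hnot2 : ∀ x, x ∈ V₁ → x ∉ V₂ := fun x h1 => Set.disjoint_left.mp hdisj h1
  have hgf : ∀ x : V, g x ≠ f x := by
    intro x; by_cases h : x ∈ A' <;> simp [hfdef, hgdef, h]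
  have hmemA : ∀ a : V₁, a.1 ∈ A' ↔ a ∈ A := by
    intro a
    constructor
    · rintro ⟨h, ha⟩
      exact (Subtype.coe_eta a h) ▸ ha
    · intro ha; exact ⟨a.2, ha⟩
  have hApart : ∀ a b : V₁, AdjH a.1 b.1 →
      (a.1 ∈ A' ∧ b.1 ∉ A') ∨ (a.1 ∉ A' ∧ b.1 ∈ A') := by
    intro a b h
    rcases hAB a b h with ⟨ha, hb⟩ | ⟨ha, hb⟩
    · left
      refine ⟨(hmemA a).2 ha, fun hbA => ?_⟩
      exact (Set.disjoint_left.mp hABd ((hmemA b).1 hbA)) hb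
    · right
      refine ⟨fun haA => (Set.disjoint_left.mp hABd ((hmemA a).1 haA)) ha, (hmemA b).2 hb⟩
  -- colour_key hypotheses for the subtype digraph
  have hcol' : ∀ a b : V₁, AdjH a.1 b.1 → col a.1 b.1 = f a.1 := by
    intro a b _
    simp [hcoldef, hnot2 a.1 a.2]
  have hfg' : ∀ a b : V₁, AdjH a.1 b.1 → f a.1 = g b.1 := by
    intro a b h
    rcases hApart a b h with ⟨ha, hb⟩ | ⟨ha, hb⟩ <;> simp [hfdef, hgdef, ha, hb]
  have halt' : ∀ a b : V₁, AdjH a.1 b.1 → f a.1 ≠ f b.1 := by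
    intro a b h
    rcases hApart a b h with ⟨ha, hb⟩ | ⟨ha, hb⟩ <;> simp [hfdef, ha, hb]
  -- lifted paths inside V₁ with all properties we need
  have lift1 : ∀ a b : V₁, ∃ p : DWalk Adj a.1 b.1,
      p.support.Nodup ∧ (∀ x ∈ p.support, x ∈ V₁) ∧
      (p.arcs.map fun e => col e.1 e.2).Chain' (· ≠ ·) ∧
      (∀ x ∈ (p.arcs.map fun e => col e.1 e.2).head?, x = f a.1) ∧
      (∀ x ∈ (p.arcs.map fun e => col e.1 e.2).getLast?, x = g b.1) := by
    intro a b
    obtain ⟨q, hq⟩ := hstrong1 a b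
    refine ⟨DWalk.mapW Subtype.val (fun a b h => hsubset _ _ h) q, ?_, ?_, ?_⟩
    · rw [DWalk.support_mapW]
      exact hq.map Subtype.val_injective
    · intro x hx
      rw [DWalk.support_mapW] at hx
      obtain ⟨y, _, rfl⟩ := List.mem_map.1 hx
      exact y.2
    · have key := DWalk.colour_key (Adj' := fun a b : V₁ => AdjH a.1 b.1)
        (col := fun a b : V₁ => col a.1 b.1) (f := fun a : V₁ => f a.1)
        (g := fun a : V₁ => g a.1)
        (fun a b h => hcol' a b h) (fun a b h => hfg' a b h)
        (fun a b h => halt' a b h) q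
      have harc : ((DWalk.mapW Subtype.val (fun a b h => hsubset _ _ h) q).arcs.map
          fun e => col e.1 e.2) = q.arcs.map (fun e : V₁ × V₁ => col e.1.1 e.2.1) := by
        rw [DWalk.arcs_mapW, List.map_map]
        rfl
      rw [harc]
      exact key
  -- the colouring is a proper-connection 2-colouring
  have hPC : IsPCColouring Adj 2 col := by
    constructor
    · intro u v _
      simp only [hcoldef, hfdef, hgdef, Finset.mem_Icc]
      split_ifs <;> omega
    · intro u v huv
      rcases hmem u with hu | hu <;> rcases hmem v with hv | hv
      · -- both in V₁
        obtain ⟨p, hnd, _, hch, _, _⟩ := lift1 ⟨u, hu⟩ ⟨v, hv⟩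
        exact ⟨p, hnd, hch⟩
      · -- u ∈ V₁, v ∈ V₂
        obtain ⟨pH, _⟩ := hstrongH u v
        obtain ⟨b, hbv⟩ := pH.exists_adj_last huv
        have hb : b ∈ V₁ := by
          rcases hmem b with hb | hb
          · exact hb
          · exact absurd hbv (hind b hb v hv)
        obtain ⟨p, hnd, hsup, hch, _, hlast⟩ := lift1 ⟨u, hu⟩ ⟨b, hb⟩
        refine ⟨p.snoc (hsubset b v hbv), ?_, ?_⟩
        · unfold DWalk.IsPath
          rw [DWalk.support_snoc]
          refine List.Nodup.append hnd (List.nodup_singleton v) ?_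
          intro x hx hx'
          rw [List.mem_singleton] at hx'
          exact hnot2 x (hsup x hx) (hx' ▸ hv)
        · unfold ProperlyColoured
          rw [DWalk.arcs_snoc, List.map_append]
          refine List.isChain_append.2 ⟨hch, List.isChain_singleton _, ?_⟩
          intro x hx y hy
          simp at hy
          rw [hlast x hx, ← hy]
          have : col b v = f b := by simp [hcoldef, hnot2 b hb]
          rw [this]
          exact hgf b
      · -- u ∈ V₂, v ∈ V₁
        obtain ⟨pH, _⟩ := hstrongH u v
        obtain ⟨c₀, huc⟩ := pH.exists_adj_head huv
        have hc : c₀ ∈ V₁ := by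
          rcases hmem c₀ with hc | hc
          · exact hc
          · exact absurd huc (hind u hu c₀ hc)
        obtain ⟨p, hnd, hsup, hch, hhead, _⟩ := lift1 ⟨c₀, hc⟩ ⟨v, hv⟩
        refine ⟨DWalk.cons (hsubset u c₀ huc) p, ?_, ?_⟩
        · unfold DWalk.IsPath
          rw [DWalk.support]
          refine List.nodup_cons.2 ⟨fun hx => hnot2 u (hsup u hx) hu, hnd⟩
        · unfold ProperlyColoured
          rw [DWalk.arcs, List.map_cons]
          refine List.isChain_cons.2 ⟨?_, hch⟩
          intro y hy
          rw [hhead y hy]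
          have : col u c₀ = g c₀ := by simp [hcoldef, hu]
          rw [this]
          exact hgf c₀
      · -- both in V₂
        obtain ⟨pH, _⟩ := hstrongH u v
        obtain ⟨c₀, huc⟩ := pH.exists_adj_head huv
        obtain ⟨b, hbv⟩ := pH.exists_adj_last huv
        have hc : c₀ ∈ V₁ := by
          rcases hmem c₀ with hc | hc
          · exact hc
          · exact absurd huc (hind u hu c₀ hc)
        have hb : b ∈ V₁ := by
          rcases hmem b with hb | hb
          · exact hb
          · exact absurd hbv (hind b hb v hv)
        obtain ⟨p, hnd, hsup, hch, hhead, hlast⟩ := lift1 ⟨c₀, hc⟩ ⟨b, hb⟩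
        refine ⟨DWalk.cons (hsubset u c₀ huc) (p.snoc (hsubset b v hbv)), ?_, ?_⟩
        · unfold DWalk.IsPath
          rw [DWalk.support, DWalk.support_snoc]
          refine List.nodup_cons.2 ⟨?_, ?_⟩
          · intro hx
            rcases List.mem_append.1 hx with hx | hx
            · exact hnot2 u (hsup u hx) hu
            · exact huv (List.mem_singleton.1 hx)
          · refine List.Nodup.append hnd (List.nodup_singleton v) ?_
            intro x hx hx'
            rw [List.mem_singleton] at hx'
            exact hnot2 x (hsup x hx) (hx' ▸ hv)
        · unfold ProperlyColoured
          rw [DWalk.arcs, List.map_cons, DWalk.arcs_snoc, List.map_append]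
          have hcolbv : col b v = f b := by simp [hcoldef, hnot2 b hb]
          have hcoluc : col u c₀ = g c₀ := by simp [hcoldef, hu]
          refine List.isChain_cons.2 ⟨?_, ?_⟩
          · intro y hy
            rcases hL : (p.arcs.map fun e => col e.1 e.2) with _ | ⟨z, l⟩
            · -- p has no arcs, so c₀ = b
              have hcb : c₀ = b := DWalk.eq_of_arcs_eq_nil p (by simpa using hL)
              rw [hL] at hy
              simp at hy
              rw [← hy, hcoluc, hcolbv, ← hcb]
              exact hgf c₀
            · rw [hL] at hy
              simp only [List.cons_append, List.head?_cons, Option.mem_some_iff] at hy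
              have : y = f c₀ := hhead y (by rw [hL]; simp [hy])
              rw [this, hcoluc]
              exact hgf c₀
          · refine List.isChain_append.2 ⟨hch, List.isChain_singleton _, ?_⟩
            intro x hx y hy
            simp at hy
            rw [hlast x hx, ← hy, hcolbv]
            exact hgf b
  exact Nat.sInf_le ⟨col, hPC⟩
end

section
/- Let D be a Hamiltonian digraph of odd order and let C be a Hamiltonian cycle of D. If every vertex of D is the tail of an even chord of C, then the proper connection number of D is at most 2. -/
open PCDigraph


/-! ### Auxiliary machinery for the proof -/

namespace PCDigraph

namespace DWalk

variable {V : Type*} {A : V → V → Prop}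

/-- Concatenation of directed walks. -/
def append : ∀ {u v w : V}, DWalk A u v → DWalk A v w → DWalk A u w
  | _, _, _, .nil, q => q
  | _, _, _, .cons h p, q => .cons h (append p q)

/-- Map a walk along a vertex map carrying the adjacency relation. -/
def mapH {W : Type*} {B : W → W → Prop} (f : V → W)
    (hf : ∀ {a b : V}, A a b → B (f a) (f b)) :
    ∀ {u v : V}, DWalk A u v → DWalk B (f u) (f v)
  | _, _, .nil => .nil
  | _, _, .cons h p => .cons (hf h) (mapH f hf p)

/-- Weaken the adjacency relation of a walk. -/
def weaken {B : V → V → Prop} (hAB : ∀ {a b : V}, A a b → B a b) :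
    ∀ {u v : V}, DWalk A u v → DWalk B u v
  | _, _, .nil => .nil
  | _, _, .cons h p => .cons (hAB h) (weaken hAB p)

lemma support_weaken {B : V → V → Prop} (hAB : ∀ {a b : V}, A a b → B a b) :
    ∀ {u v : V} (p : DWalk A u v), (p.weaken hAB).support = p.support := by
  intro u v p
  induction p with
  | nil => rfl
  | cons h p ih => simp [weaken, support, ih]

lemma arcs_weaken {B : V → V → Prop} (hAB : ∀ {a b : V}, A a b → B a b) :
    ∀ {u v : V} (p : DWalk A u v), (p.weaken hAB).arcs = p.arcs := by
  intro u v p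
  induction p with
  | nil => rfl
  | cons h p ih => simp [weaken, arcs, ih]

lemma head_arcs : ∀ {u v : V} (p : DWalk A u v) (a : V × V), a ∈ p.arcs.head? → a.1 = u := by
  intro u v p
  cases p with
  | nil => intro a ha; simp [arcs] at ha
  | cons h q =>
      intro a ha
      simp [arcs] at ha
      rw [← ha]

lemma chain_of_flip (g : V → ℕ) (hA : ∀ a b : V, A a b → g a ≠ g b) :
    ∀ {u v : V} (p : DWalk A u v),
      List.Chain' (fun a b : V × V => g a.1 ≠ g b.1) p.arcs := by
  intro u v p
  induction p with
  | nil => simp [arcs, List.Chain']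
  | cons h q ih =>
      rw [arcs]
      refine List.isChain_cons.mpr ⟨?_, ih⟩
      intro b hb
      rw [head_arcs q b hb]
      exact hA _ _ h

/-- Every suffix starting point of a path admits a path to the end. -/
lemma exists_suffix_path {b : V} :
    ∀ {a : V} (p : DWalk A a b), p.IsPath → ∀ u, u ∈ p.support →
      ∃ q : DWalk A u b, q.IsPath := by
  intro a p
  induction p with
  | nil =>
      intro hp u hu
      simp [support] at hu
      subst hu
      exact ⟨.nil, by simp [IsPath, support]⟩
  | cons h p ih =>
      intro hp u hu
      simp [support] at hu
      rcases hu with rfl | hu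
      · exact ⟨.cons h p, hp⟩
      · have hp' : p.IsPath := by
          simp [IsPath, support] at hp
          exact hp.2
        exact ih hp' u hu

/-- Any directed walk contains a directed path with the same endpoints. -/
lemma exists_path : ∀ {a b : V} (_ : DWalk A a b), ∃ q : DWalk A a b, q.IsPath := by
  intro a b p
  induction p with
  | nil => exact ⟨.nil, by simp [IsPath, support]⟩
  | @cons u w b h p ih =>
      obtain ⟨q, hq⟩ := ih
      by_cases hmem : u ∈ q.support
      · exact exists_suffix_path q hq u hmem
      · refine ⟨.cons h q, ?_⟩
        simp [IsPath, support] at hq ⊢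
        exact ⟨hmem, hq⟩

end DWalk

/-- If the colour of an arc only depends on its tail and every arc changes the
value of `g`, then every walk is properly coloured. -/
lemma proper_of_flip {V : Type*} {A : V → V → Prop} (c : V → V → ℕ) (g : V → ℕ)
    (hc : ∀ u v : V, c u v = g u) (hA : ∀ a b : V, A a b → g a ≠ g b)
    {u v : V} (p : DWalk A u v) : ProperlyColoured c p := by
  unfold ProperlyColoured
  rw [List.Chain', List.isChain_map]
  refine (DWalk.chain_of_flip g hA p).imp ?_
  intro a b hab
  rw [hc a.1 a.2, hc b.1 b.2]
  exact hab

/-- Head-closed "interval" predicate used in the selection argument. -/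
def IsClosedInt (n : ℕ) (h : ZMod n → ZMod n) (a : ZMod n) (m : ℕ) : Prop :=
  ∀ p : ZMod n, (p - a).val < m → (h p - a).val < m

lemma val_sub_lt_iff {n : ℕ} [NeZero n] (z : ZMod n) (t : ℕ) (ht1 : 1 ≤ t) (ht2 : t ≤ n - 1) :
    (z - (t : ZMod n)).val < n - t ↔ t ≤ z.val := by
  have hz : z.val < n := ZMod.val_lt z
  have hzz : ((z.val : ℕ) : ZMod n) = z := ZMod.natCast_rightInverse z
  by_cases hc : t ≤ z.val
  · have e : z - (t : ZMod n) = ((z.val - t : ℕ) : ZMod n) := by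
      rw [Nat.cast_sub hc, hzz]
    rw [e, ZMod.val_cast_of_lt (by omega)]
    omega
  · have e : z - (t : ZMod n) = ((z.val + n - t : ℕ) : ZMod n) := by
      rw [Nat.cast_sub (by omega), Nat.cast_add, hzz, ZMod.natCast_self, add_zero]
    rw [e, ZMod.val_cast_of_lt (by omega)]
    omega

/-- Selection of a good cut point `s`: every "cut" `t` is crossed backwards by
some chord avoiding `s`. -/
lemma exists_good (n : ℕ) (hn : 2 ≤ n) (h : ZMod n → ZMod n) (hh : ∀ p, h p ≠ p) :
    ∃ s : ZMod n, ∀ t : ℕ, 1 ≤ t → t ≤ n - 1 →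
      ∃ p : ZMod n, (h p - s).val < t ∧ t ≤ (p - s).val := by
  haveI : NeZero n := ⟨by omega⟩
  have main : ∃ s : ZMod n, ∀ m : ℕ, 1 ≤ m → m ≤ n - 1 →
      ¬ IsClosedInt n h (s - (m : ZMod n)) m := by
    by_cases hne : {m : ℕ | 1 ≤ m ∧ m ≤ n - 1 ∧ ∃ a, IsClosedInt n h a m}.Nonempty
    · obtain ⟨hM1, hMn, a, hCl⟩ := Nat.sInf_mem hne
      set M := sInf {m : ℕ | 1 ≤ m ∧ m ≤ n - 1 ∧ ∃ a, IsClosedInt n h a m} with hMdef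
      have hM2 : 2 ≤ M := by
        by_contra hlt
        have hM1' : M = 1 := by omega
        rw [hM1'] at hCl
        have h0 := hCl a (by rw [sub_self, ZMod.val_zero]; omega)
        have hz : h a - a = 0 := (ZMod.val_eq_zero _).mp (by omega)
        exact hh a (by rwa [sub_eq_zero] at hz)
      set K : ℕ := M - 1 with hK
      refine ⟨a + (K : ZMod n), fun m' h1 h2 hC' => ?_⟩
      by_cases hcmp : m' < M
      · have hmem : m' ∈ {m : ℕ | 1 ≤ m ∧ m ≤ n - 1 ∧ ∃ a, IsClosedInt n h a m} :=
          ⟨h1, h2, _, hC'⟩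
        have := Nat.sInf_le hmem
        omega
      · have hClosed' : IsClosedInt n h a K := by
          intro p hp
          have hpM := hCl p (by omega)
          by_contra hcon
          have heq : (h p - a).val = K := by omega
          have hhp : h p = a + (K : ZMod n) := by
            have e1 : h p - a = (K : ZMod n) := by
              rw [← heq]; exact (ZMod.natCast_rightInverse _).symm
            linear_combination e1
          have hin : (p - (a + (K : ZMod n) - (m' : ZMod n))).val < m' := by
            have hrr : (((p - a).val : ℕ) : ZMod n) = p - a := ZMod.natCast_rightInverse _
            have c3 : (((p - a).val + m' - K : ℕ) : ZMod n)
                = (((p - a).val : ℕ) : ZMod n) + (m' : ZMod n) - (K : ZMod n) := by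
              rw [Nat.cast_sub (by omega), Nat.cast_add]
            have e1 : p - (a + (K : ZMod n) - (m' : ZMod n))
                = (((p - a).val + m' - K : ℕ) : ZMod n) := by
              rw [c3, hrr]
              ring
            rw [e1, ZMod.val_cast_of_lt (by omega)]
            omega
          have hout := hC' p hin
          rw [hhp] at hout
          have e2 : a + (K : ZMod n) - (a + (K : ZMod n) - (m' : ZMod n))
              = ((m' : ℕ) : ZMod n) := by ring
          rw [e2, ZMod.val_cast_of_lt (by omega)] at hout
          omega
        have hmem : K ∈ {m : ℕ | 1 ≤ m ∧ m ≤ n - 1 ∧ ∃ a, IsClosedInt n h a m} :=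
          ⟨by omega, by omega, a, hClosed'⟩
        have := Nat.sInf_le hmem
        omega
    · refine ⟨0, fun m h1 h2 hcl => hne ⟨m, h1, h2, _, hcl⟩⟩
  obtain ⟨s, hs⟩ := main
  refine ⟨s, fun t ht1 ht2 => ?_⟩
  have hnc := hs (n - t) (by omega) (by omega)
  unfold IsClosedInt at hnc
  push_neg at hnc
  obtain ⟨p, hp1, hp2⟩ := hnc
  have hb : s - ((n - t : ℕ) : ZMod n) = s + (t : ZMod n) := by
    rw [Nat.cast_sub (by omega), ZMod.natCast_self]; ring
  rw [hb] at hp1 hp2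
  have e1 : p - (s + (t : ZMod n)) = (p - s) - (t : ZMod n) := by ring
  have e2 : h p - (s + (t : ZMod n)) = (h p - s) - (t : ZMod n) := by ring
  rw [e1] at hp1
  rw [e2] at hp2
  have k1 := (val_sub_lt_iff (p - s) t ht1 ht2).mp hp1
  have k2 : ¬ t ≤ (h p - s).val := fun hle =>
    absurd ((val_sub_lt_iff (h p - s) t ht1 ht2).mpr hle) (by omega)
  exact ⟨p, by omega, k1⟩

/-- The auxiliary relation: forward cycle arcs (except the one entering `s`)
together with the even chords that wrap past `s`. -/
def RRel (n : ℕ) (h : ZMod n → ZMod n) (s : ZMod n) (i j : ZMod n) : Prop :=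
  (j = i + 1 ∧ (i - s).val < n - 1) ∨ (j = h i ∧ (h i - s).val < (i - s).val)

lemma exists_rwalk (n : ℕ) (hn : 2 ≤ n) (h : ZMod n → ZMod n) (s : ZMod n)
    (good : ∀ t : ℕ, 1 ≤ t → t ≤ n - 1 →
      ∃ p : ZMod n, (h p - s).val < t ∧ t ≤ (p - s).val) :
    ∀ i j : ZMod n, Nonempty (DWalk (RRel n h s) i j) := by
  haveI : NeZero n := ⟨by omega⟩
  haveI : Fact (1 < n) := ⟨by omega⟩
  have fwd : ∀ d : ℕ, ∀ i : ZMod n, (i - s).val + d ≤ n - 1 →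
      Nonempty (DWalk (RRel n h s) i (i + (d : ZMod n))) := by
    intro d
    induction d with
    | zero => intro i _; rw [Nat.cast_zero, add_zero]; exact ⟨.nil⟩
    | succ d ih =>
        intro i hi
        have h1 : (i - s).val < n - 1 := by omega
        have e1 : (i + 1 - s).val = (i - s).val + 1 := by
          have e : i + 1 - s = (i - s) + 1 := by ring
          rw [e, ZMod.val_add_of_lt (by rw [ZMod.val_one]; omega), ZMod.val_one]
        obtain ⟨w⟩ := ih (i + 1) (by omega)
        have e2 : i + 1 + (d : ZMod n) = i + (((d + 1 : ℕ)) : ZMod n) := by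
          push_cast; ring
        rw [e2] at w
        exact ⟨.cons (Or.inl ⟨rfl, h1⟩) w⟩
  have fwd2 : ∀ i j : ZMod n, (i - s).val ≤ (j - s).val →
      Nonempty (DWalk (RRel n h s) i j) := by
    intro i j hij
    have hjlt : (j - s).val < n := ZMod.val_lt _
    obtain ⟨w⟩ := fwd ((j - s).val - (i - s).val) i (by omega)
    have e1 : i + (((j - s).val - (i - s).val : ℕ) : ZMod n) = j := by
      have c1 : (((j - s).val : ℕ) : ZMod n) = j - s := ZMod.natCast_rightInverse _
      have c2 : (((i - s).val : ℕ) : ZMod n) = i - s := ZMod.natCast_rightInverse _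
      rw [Nat.cast_sub hij, c1, c2]
      ring
    rw [e1] at w
    exact ⟨w⟩
  have down : ∀ A : ℕ, ∀ i j : ZMod n, (i - s).val = A → (j - s).val < A →
      Nonempty (DWalk (RRel n h s) i j) := by
    intro A
    induction A using Nat.strong_induction_on with
    | _ A ih =>
      intro i j hiA hj
      have hAn : A ≤ n - 1 := by
        have := ZMod.val_lt (i - s); omega
      obtain ⟨p, hp1, hp2⟩ := good A (by omega) hAn
      obtain ⟨w1⟩ := fwd2 i p (by omega)
      have step : RRel n h s p (h p) := Or.inr ⟨rfl, by omega⟩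
      by_cases hc : (h p - s).val ≤ (j - s).val
      · obtain ⟨w2⟩ := fwd2 (h p) j hc
        exact ⟨w1.append (.cons step w2)⟩
      · obtain ⟨w2⟩ := ih (h p - s).val (by omega) (h p) j rfl (by omega)
        exact ⟨w1.append (.cons step w2)⟩
  intro i j
  by_cases hc : (i - s).val ≤ (j - s).val
  · exact fwd2 i j hc
  · exact down ((i - s).val) i j rfl (by omega)

end PCDigraph

/-- Let `D` be a Hamiltonian digraph of odd order and `C` be a Hamiltonian
cycle of `D`. If every vertex of `D` is the tail of an even chord of `C`, then
the proper connection number of `D` is at most `2`. -/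
theorem pc_le_two_of_even_chord_tail {V : Type*} [Fintype V] (Adj : V → V → Prop)
    (hloopless : ∀ v : V, ¬ Adj v v) (hodd : Odd (Fintype.card V))
    (x : ZMod (Fintype.card V) → V) (hC : IsHamCycle Adj x)
    (hchord : ∀ v : V, ∃ p q : ZMod (Fintype.card V),
      x p = v ∧ IsChord Adj x p q ∧ Even (chordLength (V := V) p q)) :
    pc Adj ≤ 2 := by
  classical
  have hodd' : (Fintype.card V) % 2 = 1 := Nat.odd_iff.mp hodd
  by_cases hn1 : (Fintype.card V) = 1
  · exfalso
    haveI : Subsingleton V := Fintype.card_le_one_iff_subsingleton.mp (le_of_eq hn1)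
    obtain ⟨p, q, _, hch, _⟩ := hchord (x 0)
    have hqp : x q = x p := Subsingleton.elim _ _
    exact hloopless (x p) (hqp ▸ hch.1)
  · haveI : NeZero (Fintype.card V) := ⟨by omega⟩
    have hn2 : 2 ≤ (Fintype.card V) := by omega
    have hxinj : Function.Injective x := hC.1.injective
    have key : ∀ i : ZMod (Fintype.card V), ∃ q : ZMod (Fintype.card V), Adj (x i) (x q) ∧ Even ((q - i).val) := by
      intro i
      obtain ⟨p, q, hpx, hch, hev⟩ := hchord (x i)
      have hpi : p = i := hxinj hpx
      subst hpi
      exact ⟨q, hch.1, by simpa [chordLength] using hev⟩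
    choose h hAdj hEven using key
    have hh : ∀ p : ZMod (Fintype.card V), h p ≠ p := by
      intro p e
      have h2 := hAdj p
      rw [e] at h2
      exact hloopless _ h2
    obtain ⟨s, good⟩ := exists_good (Fintype.card V) hn2 h hh
    have flip : ∀ i j : ZMod (Fintype.card V), RRel (Fintype.card V) h s i j → (i - s).val % 2 ≠ (j - s).val % 2 := by
      intro i j hr
      rcases hr with ⟨rfl, hlt⟩ | ⟨rfl, hlt⟩
      · haveI : Fact (1 < (Fintype.card V)) := ⟨by omega⟩
        have e : i + 1 - s = (i - s) + 1 := by ring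
        have e1 : (i + 1 - s).val = (i - s).val + 1 := by
          rw [e, ZMod.val_add_of_lt (by rw [ZMod.val_one]; omega), ZMod.val_one]
        omega
      · have hsum : h i - s = (i - s) + (h i - i) := by ring
        have hB : (h i - s).val = ((i - s).val + (h i - i).val) % (Fintype.card V) := by
          rw [hsum, ZMod.val_add]
        have hD2 : (h i - i).val % 2 = 0 := Nat.even_iff.mp (hEven i)
        have hD0 : (h i - i).val ≠ 0 := fun h0 => hh i (by
          have h3 := (ZMod.val_eq_zero (h i - i)).mp h0
          rwa [sub_eq_zero] at h3)
        have hDn : (h i - i).val < (Fintype.card V) := ZMod.val_lt _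
        have hAn : (i - s).val < (Fintype.card V) := ZMod.val_lt _
        by_cases hsplit : (i - s).val + (h i - i).val < (Fintype.card V)
        · rw [Nat.mod_eq_of_lt hsplit] at hB; omega
        · have e2 : ((i - s).val + (h i - i).val) % (Fintype.card V)
              = (i - s).val + (h i - i).val - (Fintype.card V) := by
            rw [Nat.mod_eq_sub_mod (by omega), Nat.mod_eq_of_lt (by omega)]
          rw [e2] at hB
          omega
    have hradj : ∀ i j : ZMod (Fintype.card V), RRel (Fintype.card V) h s i j → Adj (x i) (x j) := by
      intro i j hr
      rcases hr with ⟨rfl, _⟩ | ⟨rfl, _⟩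
      · exact hC.2 i
      · exact hAdj i
    have hsymmx : ∀ i : ZMod (Fintype.card V), (Equiv.ofBijective x hC.1).symm (x i) = i :=
      fun i => (Equiv.ofBijective x hC.1).symm_apply_apply i
    have hxsymm : ∀ u : V, x ((Equiv.ofBijective x hC.1).symm u) = u :=
      fun u => (Equiv.ofBijective x hC.1).apply_symm_apply u
    refine Nat.sInf_le ⟨fun u _ => ((Equiv.ofBijective x hC.1).symm u - s).val % 2 + 1,
      ?_, ?_⟩
    · intro u v _
      simp only [Finset.mem_Icc]
      omega
    · intro u v huv
      obtain ⟨w⟩ := exists_rwalk (Fintype.card V) hn2 h s good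
        ((Equiv.ofBijective x hC.1).symm u) ((Equiv.ofBijective x hC.1).symm v)
      have hmapped : ∀ {i j : ZMod (Fintype.card V)}, RRel (Fintype.card V) h s i j →
          (fun a b => Adj a b ∧
            ((Equiv.ofBijective x hC.1).symm a - s).val % 2 + 1
              ≠ ((Equiv.ofBijective x hC.1).symm b - s).val % 2 + 1) (x i) (x j) := by
        intro i j hr
        refine ⟨hradj i j hr, ?_⟩
        have hf := flip i j hr
        simp only [hsymmx]
        omega
      have w' := DWalk.mapH
        (B := fun a b : V => Adj a b ∧
          ((Equiv.ofBijective x hC.1).symm a - s).val % 2 + 1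
            ≠ ((Equiv.ofBijective x hC.1).symm b - s).val % 2 + 1)
        x (fun {i j} hr => hmapped hr) w
      rw [hxsymm u, hxsymm v] at w'
      obtain ⟨q, hq⟩ := DWalk.exists_path w'
      refine ⟨q.weaken (fun {a b} hab => hab.1), ?_, ?_⟩
      · show (DWalk.weaken _ q).support.Nodup
        rw [DWalk.support_weaken]
        exact hq
      · have hp := proper_of_flip
          (fun u (_ : V) => ((Equiv.ofBijective x hC.1).symm u - s).val % 2 + 1)
          (fun u => ((Equiv.ofBijective x hC.1).symm u - s).val % 2 + 1)
          (fun _ _ => rfl) (fun a b hab => hab.2) q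
        unfold ProperlyColoured at hp ⊢
        rwa [DWalk.arcs_weaken]
end

section
/- Let D be a Hamiltonian digraph of odd order and let C be a Hamiltonian cycle of D. If every vertex of D is the head of an even chord of C, then the proper connection number of D is at most 2. -/
open PCDigraph
namespace PCAux
open PCDigraph

variable {V : Type*} {Adj : V → V → Prop}

/-- Concatenation of directed walks. -/
def dappend : ∀ {u v w : V}, DWalk Adj u v → DWalk Adj v w → DWalk Adj u w
  | _, _, _, .nil, q => q
  | _, _, _, .cons h p, q => .cons h (dappend p q)

@[simp] lemma arcs_nil {v : V} : (DWalk.nil : DWalk Adj v v).arcs = [] := rfl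

@[simp] lemma arcs_cons {u v w : V} (h : Adj u v) (p : DWalk Adj v w) :
    (DWalk.cons h p).arcs = (u, v) :: p.arcs := rfl

@[simp] lemma support_nil {v : V} : (DWalk.nil : DWalk Adj v v).support = [v] := rfl

@[simp] lemma support_cons {u v w : V} (h : Adj u v) (p : DWalk Adj v w) :
    (DWalk.cons h p).support = u :: p.support := rfl

lemma arcs_dappend : ∀ {u v w : V} (p : DWalk Adj u v) (q : DWalk Adj v w),
    (dappend p q).arcs = p.arcs ++ q.arcs
  | _, _, _, .nil, q => rfl
  | _, _, _, .cons h p, q => by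
      simp [dappend, arcs_dappend p q]

lemma support_eq : ∀ {u v : V} (p : DWalk Adj u v),
    p.support = p.arcs.map Prod.fst ++ [v]
  | _, _, .nil => rfl
  | _, _, .cons h p => by simp [support_eq p]

lemma support_dappend {u v w : V} (p : DWalk Adj u v) (q : DWalk Adj v w) :
    (dappend p q).support = p.arcs.map Prod.fst ++ q.support := by
  rw [support_eq (dappend p q), arcs_dappend, support_eq q]
  simp

/-- walk along consecutive vertices -/
def ywalk (y : ℕ → V) (hy : ∀ t, Adj (y t) (y (t + 1))) :
    ∀ (j m : ℕ), DWalk Adj (y j) (y (j + m))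
  | _, 0 => .nil
  | j, m + 1 => dappend (ywalk y hy j m) (.cons (hy (j + m)) .nil)

lemma arcs_ywalk (y : ℕ → V) (hy : ∀ t, Adj (y t) (y (t + 1))) :
    ∀ (j m : ℕ), (ywalk y hy j m).arcs
      = (List.range m).map (fun t => (y (j + t), y (j + t + 1)))
  | j, 0 => rfl
  | j, m + 1 => by
      rw [ywalk, arcs_dappend, arcs_ywalk y hy j m, List.range_succ]
      simp

lemma support_ywalk (y : ℕ → V) (hy : ∀ t, Adj (y t) (y (t + 1))) (j m : ℕ) :
    (ywalk y hy j m).support = (List.range (m + 1)).map (fun t => y (j + t)) := by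
  rw [support_eq, arcs_ywalk, List.range_succ]
  simp [Function.comp]

/-- existence form with arbitrary endpoints -/
lemma seg_ex (y : ℕ → V) (hy : ∀ t, Adj (y t) (y (t + 1))) (j k : ℕ) (h : j ≤ k) :
    ∃ w : DWalk Adj (y j) (y k),
      w.arcs = (List.range (k - j)).map (fun t => (y (j + t), y (j + t + 1))) ∧
      w.support = (List.range (k - j + 1)).map (fun t => y (j + t)) := by
  obtain ⟨m, rfl⟩ : ∃ m, k = j + m := ⟨k - j, by omega⟩
  have hm : j + m - j = m := by omega
  rw [hm]
  exact ⟨ywalk y hy j m, arcs_ywalk y hy j m, support_ywalk y hy j m⟩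

end PCAux
open PCAux in
theorem aux_main {V : Type*} (Adj : V → V → Prop) (n : ℕ)
    (hloopless : ∀ v : V, ¬ Adj v v) (hodd : Odd n)
    (x : ZMod n → V) (hbij : Function.Bijective x)
    (hcyc : ∀ i : ZMod n, Adj (x i) (x (i + 1)))
    (hchord : ∀ v : V, ∃ p q : ZMod n,
      x q = v ∧ (Adj (x p) (x q) ∧ q ≠ p + 1) ∧ Even ((q - p).val)) :
    ∃ c : V → V → ℕ, IsPCColouring Adj 2 c := by
  classical
  have hn0 : n ≠ 0 := by
    rintro rfl
    simp [Nat.odd_iff] at hodd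
  haveI : NeZero n := ⟨hn0⟩
  have hn2 : n % 2 = 1 := Nat.odd_iff.mp hodd
  by_cases hcard : n = 1
  · -- trivial one-vertex case
    have hsub : ∀ u v : V, u = v := by
      intro u v
      have h1 : Function.Injective x := hbij.injective
      obtain ⟨i, rfl⟩ := hbij.surjective u
      obtain ⟨j, rfl⟩ := hbij.surjective v
      congr 1
      subst hcard
      exact Subsingleton.elim i j
    refine ⟨fun _ _ => 1, ?_, ?_⟩
    · intro u v huv
      exact absurd ((hsub u v) ▸ huv) (hloopless v)
    · intro u v huv
      exact absurd (hsub u v) huv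
  have hn3 : 3 ≤ n := by omega
  haveI : Fact (1 < n) := ⟨by omega⟩
  -- the equivalence given by x
  set e : ZMod n ≃ V := Equiv.ofBijective x hbij with he
  have hesymm : ∀ i : ZMod n, e.symm (x i) = i := fun i => e.symm_apply_apply i
  have hexs : ∀ v : V, x (e.symm v) = v := fun v => e.apply_symm_apply v
  -- chord selection
  have hch : ∀ i : ZMod n, ∃ p : ZMod n,
      Adj (x p) (x i) ∧ i ≠ p + 1 ∧ Even ((i - p).val) := by
    intro i
    obtain ⟨p, q, hq, ⟨hadj, hne⟩, hev⟩ := hchord (x i)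
    have hqi : q = i := hbij.injective hq
    subst hqi
    exact ⟨p, hadj, hne, hev⟩
  choose tl htlAdj htlNe htlEven using hch
  set L : ZMod n → ℕ := fun i => (i - tl i).val with hLdef
  have hL2 : ∀ i, 2 ≤ L i ∧ L i ≤ n - 1 := by
    intro i
    have hlt : L i < n := ZMod.val_lt _
    have h0 : L i ≠ 0 := by
      intro h
      have h' : i - tl i = 0 := (ZMod.val_eq_zero _).mp h
      have h'' : i = tl i := sub_eq_zero.mp h'
      have ha := htlAdj i
      rw [← h''] at ha
      exact hloopless (x i) ha
    have h1 : L i ≠ 1 := by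
      intro h
      have h' : ((L i : ℕ) : ZMod n) = i - tl i := ZMod.natCast_zmod_val _
      rw [h] at h'
      push_cast at h'
      have : i = tl i + 1 := by linear_combination -h'
      exact htlNe i this
    omega
  -- minimum-length chord
  obtain ⟨istar, -, hmin⟩ :=
    Finset.exists_min_image (Finset.univ : Finset (ZMod n)) L ⟨0, Finset.mem_univ 0⟩
  set d : ZMod n := tl istar with hd
  set Lm : ℕ := L istar with hLm
  have hLm2 : 2 ≤ Lm := (hL2 istar).1
  have hLmn : Lm ≤ n - 1 := (hL2 istar).2
  have hEvenLm : Even Lm := htlEven istar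
  -- subtraction of values
  have valsub : ∀ z w : ZMod n, (z - w).val = (z.val + (n - w.val)) % n := by
    intro z w
    by_cases hw : w = 0
    · subst hw
      rw [sub_zero, ZMod.val_zero, Nat.sub_zero, Nat.add_mod_right,
        Nat.mod_eq_of_lt (ZMod.val_lt z)]
    · haveI := NeZero.mk hw
      rw [sub_eq_add_neg, ZMod.val_add, ZMod.val_neg_of_ne_zero]
  -- positions
  set y : ℕ → V := fun t => x (d + 1 + (t : ZMod n)) with hy
  set pos : V → ℕ := fun v => (e.symm v - (d + 1)).val with hpos
  have hposle : ∀ v, pos v ≤ n - 1 := by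
    intro v
    have := ZMod.val_lt (e.symm v - (d + 1))
    simp only [hpos]
    omega
  have hy_pos : ∀ t, t ≤ n - 1 → pos (y t) = t := by
    intro t ht
    simp only [hpos, hy, hesymm]
    have h1 : d + 1 + (t : ZMod n) - (d + 1) = (t : ZMod n) := by ring
    rw [h1, ZMod.val_natCast, Nat.mod_eq_of_lt (by omega)]
  have hy_surj : ∀ v, y (pos v) = v := by
    intro v
    simp only [hpos, hy]
    rw [ZMod.natCast_zmod_val]
    have h1 : d + 1 + (e.symm v - (d + 1)) = e.symm v := by ring
    rw [h1, hexs]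
  have hy_inj : ∀ s t, s ≤ n - 1 → t ≤ n - 1 → y s = y t → s = t := by
    intro s t hs ht hst
    rw [← hy_pos s hs, ← hy_pos t ht, hst]
  have hy_adj : ∀ t, Adj (y t) (y (t + 1)) := by
    intro t
    have h1 : y (t + 1) = x (d + 1 + (t : ZMod n) + 1) := by
      simp only [hy]
      congr 1
      push_cast
      ring
    rw [h1]
    simp only [hy]
    exact hcyc _
  -- facts about the minimal chord (the "star" chord)
  have hcastn1 : ((n - 1 : ℕ) : ZMod n) = -1 := by
    have h1 : ((n - 1 : ℕ) : ZMod n) = (n : ℕ) - 1 := by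
      push_cast [Nat.cast_sub (by omega : 1 ≤ n)]
      ring
    rw [h1, ZMod.natCast_self]
    ring
  have hystar_tail : y (n - 1) = x d := by
    simp only [hy, hcastn1]
    congr 1
    ring
  have hposstar : (istar - (d + 1)).val = Lm - 1 := by
    have h1 : istar - (d + 1) = (istar - d) - 1 := by ring
    rw [h1, valsub, ZMod.val_one]
    have h2 : (istar - d).val = Lm := rfl
    rw [h2]
    have h3 : Lm + (n - 1) = n + (Lm - 1) := by omega
    rw [h3, Nat.add_mod_left, Nat.mod_eq_of_lt (by omega)]
  have hystar_head : y (Lm - 1) = x istar := by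
    simp only [hy]
    rw [show ((Lm - 1 : ℕ) : ZMod n) = ((istar - (d+1)).val : ZMod n) by rw [hposstar],
      ZMod.natCast_zmod_val]
    congr 1
    ring
  have hestar : Adj (y (n - 1)) (y (Lm - 1)) := by
    rw [hystar_tail, hystar_head]
    exact htlAdj istar
  have hestar_par : (n - 1) % 2 ≠ (Lm - 1) % 2 := by
    have := Nat.even_iff.mp hEvenLm
    omega
  -- chord facts for low-position heads
  have chordT : ∀ b : ℕ, b ≤ n - 1 → b + 2 ≤ Lm →
      ∃ T, b < T ∧ T ≤ n - 1 ∧ T % 2 ≠ b % 2 ∧ Adj (y T) (y b) := by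
    intro b hb hbLm
    set ib : ZMod n := d + 1 + (b : ZMod n) with hib
    set T : ℕ := (tl ib - (d + 1)).val with hT
    have hTle : T ≤ n - 1 := by
      have := ZMod.val_lt (tl ib - (d + 1))
      omega
    have hxyT : x (tl ib) = y T := by
      simp only [hy, hT]
      rw [ZMod.natCast_zmod_val]
      congr 1
      ring
    have hadjT : Adj (y T) (y b) := by
      rw [← hxyT]
      exact htlAdj ib
    have hLib : L ib = (b + (n - T)) % n := by
      have h1 : ib - tl ib = (b : ZMod n) - (tl ib - (d + 1)) := by
        rw [hib]; ring
      have h2 : L ib = (ib - tl ib).val := rfl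
      rw [h2, h1, valsub, ZMod.val_natCast]
      have h3 : b % n = b := Nat.mod_eq_of_lt (by omega)
      rw [h3]
    have hLib2 : 2 ≤ L ib := (hL2 ib).1
    have hminb : Lm ≤ L ib := hmin ib (Finset.mem_univ ib)
    have hEv : Even (L ib) := htlEven ib
    have hEv' : L ib % 2 = 0 := Nat.even_iff.mp hEv
    rcases lt_trichotomy T b with h | h | h
    · exfalso
      have h3 : b + (n - T) = n + (b - T) := by omega
      have h4 : L ib = b - T := by
        rw [hLib, h3, Nat.add_mod_left, Nat.mod_eq_of_lt (by omega)]
      omega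
    · exfalso
      have h3 : b + (n - T) = n := by omega
      have h4 : L ib = 0 := by rw [hLib, h3, Nat.mod_self]
      omega
    · have h4 : L ib = b + (n - T) := by
        rw [hLib, Nat.mod_eq_of_lt (by omega)]
      exact ⟨T, h, hTle, by omega, hadjT⟩
  -- the colouring
  set c : V → V → ℕ := fun u _ => 1 + pos u % 2 with hc
  -- properness from parity-alternation of arcs
  have hproper : ∀ (u v : V) (w : DWalk Adj u v),
      (∀ ar ∈ w.arcs, ∃ s t, s ≤ n - 1 ∧ t ≤ n - 1 ∧ s % 2 ≠ t % 2 ∧ ar = (y s, y t)) →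
      ProperlyColoured c w := by
    intro u v w
    induction w with
    | nil => intro _; simp [ProperlyColoured, DWalk.arcs]; exact List.isChain_nil
    | @cons u₁ v₁ w₁ h p ih =>
      intro hg
      cases p with
      | nil => simp [ProperlyColoured, DWalk.arcs]; exact List.isChain_singleton _
      | @cons u₂ v₂ w₂ h' p' =>
        have hg1 := hg (u₁, v₁) (by simp [DWalk.arcs])
        have hg2 := hg (v₁, v₂) (by simp [DWalk.arcs])
        obtain ⟨s1, t1, hs1, ht1, hp1, he1⟩ := hg1
        obtain ⟨s2, t2, hs2, ht2, hp2, he2⟩ := hg2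
        rw [Prod.mk.injEq] at he1 he2
        have hcol : c u₁ v₁ ≠ c v₁ v₂ := by
          simp only [hc]
          rw [he1.1, he2.1, hy_pos s1 hs1, hy_pos s2 hs2]
          have : t1 = s2 := hy_inj t1 s2 ht1 hs2 (by rw [← he1.2]; exact he2.1)
          omega
        have hrest : ProperlyColoured c (DWalk.cons h' p') := by
          apply ih
          intro ar har
          exact hg ar (by simp [DWalk.arcs] at har ⊢; tauto)
        rw [ProperlyColoured] at hrest ⊢
        simp only [DWalk.arcs, List.map_cons] at hrest ⊢
        exact List.isChain_cons_cons.mpr ⟨hcol, hrest⟩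
  -- main walk construction for "descending" pairs
  have main : ∀ (k a b : ℕ), a - b ≤ k → b < a → a ≤ n - 1 →
      ∃ (w : DWalk Adj (y a) (y b)) (P : List ℕ),
        w.support = P.map y ∧ P.Nodup ∧
        (∀ t ∈ P, min b (Lm - 1) ≤ t ∧ t ≤ n - 1) ∧
        (∀ ar ∈ w.arcs, ∃ s t, s ≤ n - 1 ∧ t ≤ n - 1 ∧ s % 2 ≠ t % 2 ∧ ar = (y s, y t)) := by
    intro k
    induction k with
    | zero => intro a b h1 h2 h3; exfalso; omega
    | succ k ih =>
      intro a b hk hba ha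
      have hb' : b ≤ n - 1 := by omega
      by_cases hbig : Lm - 1 ≤ b
      · -- route via the star chord
        obtain ⟨w1, hw1a, hw1s⟩ := seg_ex y hy_adj a (n - 1) ha
        obtain ⟨w2, hw2a, hw2s⟩ := seg_ex y hy_adj (Lm - 1) b hbig
        refine ⟨dappend w1 (.cons hestar w2),
          ((List.range (n - 1 - a)).map (fun t => a + t)) ++ (n - 1) ::
            ((List.range (b - (Lm - 1) + 1)).map (fun t => (Lm - 1) + t)), ?_, ?_, ?_, ?_⟩
        · rw [support_dappend, hw1a]
          simp [hw2s, List.map_map, Function.comp_def]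
        · rw [List.nodup_append']
          refine ⟨?_, ?_, ?_⟩
          · exact List.Nodup.map (add_right_injective _) List.nodup_range
          · rw [List.nodup_cons]
            constructor
            · simp only [List.mem_map, List.mem_range]
              rintro ⟨t, ht, hteq⟩
              omega
            · exact List.Nodup.map (add_right_injective _) List.nodup_range
          · intro t ht hmem
            simp only [List.mem_map, List.mem_range] at ht
            obtain ⟨i, hi, rfl⟩ := ht
            simp only [List.mem_cons, List.mem_map, List.mem_range] at hmem
            rcases hmem with h1 | ⟨j, hj, hjeq⟩ <;> omega
        · intro t ht
          simp only [List.mem_append, List.mem_cons, List.mem_map, List.mem_range] at ht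
          rcases ht with ⟨i, hi, rfl⟩ | h1 | ⟨j, hj, rfl⟩ <;> omega
        · intro ar har
          rw [arcs_dappend, arcs_cons] at har
          simp only [List.mem_append, List.mem_cons] at har
          rcases har with h1 | h2 | h3
          · rw [hw1a] at h1
            simp only [List.mem_map, List.mem_range] at h1
            obtain ⟨t, ht, rfl⟩ := h1
            exact ⟨a + t, a + t + 1, by omega, by omega, by omega, rfl⟩
          · exact ⟨n - 1, Lm - 1, le_rfl, by omega, hestar_par, h2⟩
          · rw [hw2a] at h3
            simp only [List.mem_map, List.mem_range] at h3
            obtain ⟨t, ht, rfl⟩ := h3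
            exact ⟨Lm - 1 + t, Lm - 1 + t + 1, by omega, by omega, by omega, rfl⟩
      · -- b is a low position: use its own chord
        have hbs : b + 2 ≤ Lm := by omega
        obtain ⟨T, hTb, hTle, hTpar, hTadj⟩ := chordT b hb' hbs
        by_cases hTa : a ≤ T
        · -- reach the tail directly along the cycle
          obtain ⟨w1, hw1a, hw1s⟩ := seg_ex y hy_adj a T hTa
          refine ⟨dappend w1 (.cons hTadj .nil),
            ((List.range (T - a + 1)).map (fun t => a + t)) ++ [b], ?_, ?_, ?_, ?_⟩
          · rw [support_dappend, hw1a]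
            have haT : a + (T - a) = T := by omega
            simp [List.range_succ, List.map_map, Function.comp, haT]
          · rw [List.nodup_append']
            refine ⟨List.Nodup.map (add_right_injective _) List.nodup_range,
              List.nodup_singleton b, ?_⟩
            intro t ht hmem
            simp only [List.mem_map, List.mem_range] at ht
            obtain ⟨i, hi, rfl⟩ := ht
            simp only [List.mem_singleton] at hmem
            omega
          · intro t ht
            simp only [List.mem_append, List.mem_singleton, List.mem_map,
              List.mem_range] at ht
            rcases ht with ⟨i, hi, rfl⟩ | rfl <;> omega
          · intro ar har
            rw [arcs_dappend, arcs_cons, arcs_nil] at har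
            simp only [List.mem_append, List.mem_cons, List.not_mem_nil,
              or_false] at har
            rcases har with h1 | h2
            · rw [hw1a] at h1
              simp only [List.mem_map, List.mem_range] at h1
              obtain ⟨t, ht, rfl⟩ := h1
              exact ⟨a + t, a + t + 1, by omega, by omega, by omega, rfl⟩
            · exact ⟨T, b, hTle, by omega, hTpar, h2⟩
        · -- recurse to the tail of b's chord
          push_neg at hTa
          obtain ⟨w1, P1, hs1, hnd1, hbd1, hag1⟩ := ih a T (by omega) hTa ha
          have hbP1 : ∀ t ∈ P1, b < t := by
            intro t ht
            have := (hbd1 t ht).1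
            have h1 : b < min T (Lm - 1) := by omega
            omega
          refine ⟨dappend w1 (.cons hTadj .nil), P1 ++ [b], ?_, ?_, ?_, ?_⟩
          · have h1 : (w1.arcs.map Prod.fst) ++ [y T] = P1.map y :=
              (support_eq w1).symm.trans hs1
            rw [support_dappend]
            calc (w1.arcs.map Prod.fst) ++ (DWalk.cons hTadj DWalk.nil).support
                = ((w1.arcs.map Prod.fst) ++ [y T]) ++ [y b] := by simp
              _ = P1.map y ++ [y b] := by rw [h1]
              _ = (P1 ++ [b]).map y := by simp
          · rw [List.nodup_append']
            refine ⟨hnd1, List.nodup_singleton b, ?_⟩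
            intro t ht hmem
            simp only [List.mem_singleton] at hmem
            subst hmem
            exact absurd rfl (Nat.ne_of_gt (hbP1 t ht))
          · intro t ht
            simp only [List.mem_append, List.mem_singleton] at ht
            rcases ht with ht | rfl
            · have h2 := hbd1 t ht
              have h3 := hbP1 t ht
              omega
            · omega
          · intro ar har
            rw [arcs_dappend, arcs_cons, arcs_nil] at har
            simp only [List.mem_append, List.mem_cons, List.not_mem_nil,
              or_false] at har
            rcases har with h1 | h2
            · exact hag1 ar h1
            · exact ⟨T, b, hTle, by omega, hTpar, h2⟩
  -- final assembly
  refine ⟨c, ?_, ?_⟩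
  · intro u v _
    simp only [hc, Finset.mem_Icc]
    omega
  · intro u v huv
    obtain ⟨a, ha, rfl⟩ : ∃ a, a ≤ n - 1 ∧ y a = u := ⟨pos u, hposle u, hy_surj u⟩
    obtain ⟨b, hb, rfl⟩ : ∃ b, b ≤ n - 1 ∧ y b = v := ⟨pos v, hposle v, hy_surj v⟩
    have hab : a ≠ b := fun h => huv (by rw [h])
    rcases Nat.lt_or_ge a b with h | h
    · obtain ⟨w, hwa, hws⟩ := seg_ex y hy_adj a b h.le
      refine ⟨w, ?_, ?_⟩
      · rw [DWalk.IsPath, hws]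
        refine List.Nodup.map_on ?_ List.nodup_range
        intro p hp q hq hpq
        simp only [List.mem_range] at hp hq
        have := hy_inj (a + p) (a + q) (by omega) (by omega) hpq
        omega
      · apply hproper
        intro ar har
        rw [hwa] at har
        simp only [List.mem_map, List.mem_range] at har
        obtain ⟨t, ht, rfl⟩ := har
        exact ⟨a + t, a + t + 1, by omega, by omega, by omega, rfl⟩
    · have h' : b < a := by omega
      obtain ⟨w, P, hws, hnd, hbd, hag⟩ := main (a - b) a b le_rfl h' ha
      refine ⟨w, ?_, hproper _ _ w hag⟩
      rw [DWalk.IsPath, hws]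
      refine List.Nodup.map_on ?_ hnd
      intro p hp q hq hpq
      exact hy_inj p q (hbd p hp).2 (hbd q hq).2 hpq

/-- Let `D` be a Hamiltonian digraph of odd order and `C` be a Hamiltonian
cycle of `D`. If every vertex of `D` is the head of an even chord of `C`, then
the proper connection number of `D` is at most `2`. -/
theorem pc_le_two_of_even_chord_head {V : Type*} [Fintype V] (Adj : V → V → Prop)
    (hloopless : ∀ v : V, ¬ Adj v v) (hodd : Odd (Fintype.card V))
    (x : ZMod (Fintype.card V) → V) (hC : IsHamCycle Adj x)
    (hchord : ∀ v : V, ∃ p q : ZMod (Fintype.card V),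
      x q = v ∧ IsChord Adj x p q ∧ Even (chordLength (V := V) p q)) :
    pc Adj ≤ 2 := by
  obtain ⟨c, hc⟩ := aux_main Adj (Fintype.card V) hloopless hodd x hC.1 hC.2 hchord
  exact Nat.sInf_le ⟨c, hc⟩
end

section
/- If n is odd, S ⊆ {1,...,n-1}, 1 ∈ S, and S contains an even integer, then the proper connection number of the circulant digraph C_n(S) is at most 2. -/
open PCDigraph

section AuxPC

open List PCDigraph

variable {V : Type*} {Adj : V → V → Prop}

private lemma head?_range'_aux (s k : ℕ) :
    (List.range' s k).head? = if k = 0 then none else some s := by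
  cases k <;> simp [List.range'_succ]

private lemma getLast?_range'_aux (s k : ℕ) :
    (List.range' s (k + 1)).getLast? = some (s + k) := by
  rw [List.range'_concat, List.getLast?_concat]
  simp

private lemma chain_climb (m : ℕ) :
    ∀ (k s : ℕ), List.Chain' (fun x y => y = x + 1 ∨ x = y + m) (List.range' s k) := by
  intro k
  induction k with
  | zero => intro s; exact List.IsChain.nil
  | succ k ih =>
      intro s
      rw [List.range'_succ]
      cases k with
      | zero => exact List.IsChain.singleton _
      | succ k =>
          rw [List.range'_succ]
          refine List.IsChain.cons_cons (Or.inl rfl) ?_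
          rw [← List.range'_succ]
          exact ih (s + 1)

private lemma dwalk_support_ne_nil {u v : V} (p : DWalk Adj u v) : p.support ≠ [] := by
  cases p <;> simp [DWalk.support]

private lemma dwalk_arcs_map_fst {u v : V} (p : DWalk Adj u v) :
    p.arcs.map Prod.fst = p.support.dropLast := by
  induction p with
  | nil => simp [DWalk.arcs, DWalk.support]
  | cons h p ih =>
      simp only [DWalk.arcs, DWalk.support, List.map_cons, ih]
      rw [List.dropLast_cons_of_ne_nil (dwalk_support_ne_nil p)]

private lemma build_dwalk {g : ℕ → V} {Rn : ℕ → ℕ → Prop}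
    (hadj : ∀ x y, Rn x y → Adj (g x) (g y)) :
    ∀ (t : List ℕ) (x y : ℕ), List.Chain Rn x t → (x :: t).getLast? = some y →
      ∃ p : DWalk Adj (g x) (g y), p.support = (x :: t).map g := by
  intro t
  induction t with
  | nil =>
      intro x y _ hlast
      have hxy : x = y := by simpa using hlast
      subst hxy
      exact ⟨.nil, by simp [DWalk.support]⟩
  | cons z t ih =>
      intro x y hc hlast
      simp only [List.Chain, List.isChain_cons_cons] at hc
      rw [List.getLast?_cons_cons] at hlast
      obtain ⟨p, hp⟩ := ih z y hc.2 hlast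
      exact ⟨.cons (hadj _ _ hc.1) p, by simp [DWalk.support, hp]⟩

/-- Master lemma: a list of values in `[0, n)`, consecutive entries related by
`+1` (climb) or `-m` (drop, i.e. a chord of step `n - m`), with no duplicates,
yields a properly coloured directed path under the tail-parity colouring. -/
private lemma master_list (n : ℕ) (hn : 0 < n) (S : Finset ℕ) (m : ℕ) (h1 : 1 ∈ S)
    (hs : n - m ∈ S) (hmn : m ≤ n) (hmodd : m % 2 = 1)
    (u v : ZMod n) (l : List ℕ)
    (hchain : l.Chain' (fun x y => y = x + 1 ∨ x = y + m))
    (hltn : ∀ x ∈ l, x < n) (hnd : l.Nodup)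
    (hhead : l.head? = some u.val) (hlast : l.getLast? = some v.val) :
    ∃ p : DWalk (circulantAdj n S) u v, p.IsPath ∧
      ProperlyColoured (fun i _ => 1 + i.val % 2) p := by
  haveI : NeZero n := ⟨hn.ne'⟩
  have hadj : ∀ x y : ℕ, (y = x + 1 ∨ x = y + m) →
      circulantAdj n S ((x : ℕ) : ZMod n) ((y : ℕ) : ZMod n) := by
    rintro x y (rfl | rfl)
    · exact ⟨1, h1, by push_cast; ring⟩
    · refine ⟨n - m, hs, ?_⟩
      have hcm : ((n - m : ℕ) : ZMod n) + ((m : ℕ) : ZMod n) = 0 := by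
        rw [← Nat.cast_add, Nat.sub_add_cancel hmn, ZMod.natCast_self]
      push_cast
      linear_combination -hcm
  obtain ⟨x, t, rfl⟩ : ∃ x t, l = x :: t := by
    cases l with
    | nil => simp at hhead
    | cons a t => exact ⟨a, t, rfl⟩
  have hx : x = u.val := by simpa using hhead
  subst hx
  have hcastu : ((u.val : ℕ) : ZMod n) = u := ZMod.natCast_rightInverse u
  have hcastv : ((v.val : ℕ) : ZMod n) = v := ZMod.natCast_rightInverse v
  have hchain2 : List.Chain (fun x y => y = x + 1 ∨ x = y + m) u.val t := hchain
  obtain ⟨p, hp⟩ := build_dwalk (Adj := circulantAdj n S) (g := fun k => ((k : ℕ) : ZMod n))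
    hadj t u.val v.val hchain2 hlast
  rw [← hcastu, ← hcastv]
  refine ⟨p, ?_, ?_⟩
  · -- IsPath
    show p.support.Nodup
    rw [hp]
    refine List.Nodup.map_on ?_ hnd
    intro x hx y hy hxy
    have hx' : x < n := hltn x hx
    have hy' : y < n := hltn y hy
    have : ((x : ℕ) : ZMod n).val = ((y : ℕ) : ZMod n).val := by rw [hxy]
    rwa [ZMod.val_cast_of_lt hx', ZMod.val_cast_of_lt hy'] at this
  · -- properly coloured
    show List.Chain' (· ≠ ·) (p.arcs.map fun e => 1 + e.1.val % 2)
    have hmap : (p.arcs.map fun e => 1 + e.1.val % 2) =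
        ((u.val :: t).dropLast).map (fun k => 1 + k % 2) := by
      have h1' : (p.arcs.map fun e => 1 + e.1.val % 2) =
          (p.arcs.map Prod.fst).map (fun a => 1 + a.val % 2) := by
        rw [List.map_map]; rfl
      rw [h1', dwalk_arcs_map_fst, hp, ← List.map_dropLast, List.map_map]
      refine List.map_congr_left ?_
      intro x hx
      have hx' : x < n := hltn x (List.dropLast_subset _ hx)
      simp [Function.comp, ZMod.val_cast_of_lt hx']
    rw [hmap]
    rw [List.Chain', List.isChain_map]
    have hpar : List.Chain' (fun x y : ℕ => 1 + x % 2 ≠ 1 + y % 2) (u.val :: t) := by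
      refine List.IsChain.imp ?_ hchain
      rintro x y (rfl | rfl) <;> omega
    exact List.IsChain.prefix hpar (List.dropLast_prefix _)


/-- Sawtooth construction: a duplicate-free climb/drop value list from `U`
down to `W < U`. -/
private lemma sawtooth (n m U W a : ℕ) (hm1 : 1 ≤ m) (hUW : W < U) (hU : U < n)
    (ha : a < m) (hdvd : ∃ b, U - W + a = m * b)
    (hfit : a + U < n + W) :
    ∃ l : List ℕ, l.Chain' (fun x y => y = x + 1 ∨ x = y + m) ∧ l.Nodup ∧
      (∀ x ∈ l, x < n) ∧ (∀ x ∈ l, W < x + m) ∧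
      l.head? = some U ∧ l.getLast? = some W := by
  obtain ⟨b, hb⟩ := hdvd
  have hbpos : 1 ≤ b := by
    rcases Nat.eq_zero_or_pos b with h | h
    · rw [h, Nat.mul_zero] at hb; omega
    · exact h
  set a1 := min a (n - 1 - U) with ha1def
  set a2 := a - a1 with ha2def
  have h12 : a1 + a2 = a := by omega
  have hPn : U + a1 < n := by omega
  have ha2W : a2 ≤ W := by omega
  have ha1m : a1 < m := by omega
  have ha2m : a2 < m := by omega
  set B := W - a2 with hBdef
  have hBW : B + a2 = W := by omega
  have hmb : m * b = m * (b - 1) + m := by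
    have hb1 : b - 1 + 1 = b := by omega
    calc m * b = m * ((b - 1) + 1) := by rw [hb1]
    _ = m * (b - 1) + m := by ring
  have hPB : B + m * b = U + a1 := by omega
  set Q := B + m * (b - 1) with hQdef
  have hQm : Q + m = U + a1 := by omega
  have hQU : Q < U := by omega
  set f : ℕ → ℕ := fun k => B + m * (b - 1 - k) with hfdef
  set L1 := List.range' U (a1 + 1) with hL1
  set L2 := (List.range b).map f with hL2
  set L3 := List.range' (B + 1) a2 with hL3
  have hL1mem : ∀ x ∈ L1, U ≤ x ∧ x ≤ U + a1 := by
    intro x hx; rw [hL1, List.mem_range'_1] at hx; omega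
  have hL2mem : ∀ x ∈ L2, ∃ k, k < b ∧ x = B + m * (b - 1 - k) := by
    intro x hx
    rw [hL2, List.mem_map] at hx
    obtain ⟨k, hk, rfl⟩ := hx
    exact ⟨k, List.mem_range.mp hk, by simp [hfdef]⟩
  have hL2bound : ∀ x ∈ L2, B ≤ x ∧ x ≤ Q := by
    intro x hx
    obtain ⟨k, hk, rfl⟩ := hL2mem x hx
    constructor
    · omega
    · have hle : m * (b - 1 - k) ≤ m * (b - 1) := Nat.mul_le_mul_left m (by omega)
      omega
  have hL3mem : ∀ x ∈ L3, B + 1 ≤ x ∧ x ≤ W := by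
    intro x hx; rw [hL3, List.mem_range'_1] at hx; omega
  have hchainL2 : List.Chain' (fun x y => y = x + 1 ∨ x = y + m) L2 := by
    rw [hL2, List.Chain', List.isChain_map]
    have hb' : b = (b - 1) + 1 := by omega
    rw [hb', List.isChain_range_succ]
    intro k hk
    right
    simp only [hfdef]
    have h1 : b - 1 - k = (b - 1 - (k + 1)) + 1 := by omega
    rw [h1, Nat.mul_succ]
    ring
  have hL1last : L1.getLast? = some (U + a1) := by
    rw [hL1]; exact getLast?_range'_aux _ _
  have hL1head : L1.head? = some U := by
    rw [hL1, head?_range'_aux]; simp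
  have hL2head : L2.head? = some Q := by
    have hb' : b = (b - 1) + 1 := by omega
    rw [hL2, hb', List.range_succ_eq_map]
    simp [hfdef, hQdef]
  have hL2last : L2.getLast? = some B := by
    have hb' : b = (b - 1) + 1 := by omega
    rw [hL2, hb', List.range_succ, List.map_append]
    simp [hfdef, List.getLast?_concat]
  have hL3head : L3.head? = if a2 = 0 then none else some (B + 1) := by
    rw [hL3]; exact head?_range'_aux _ _
  refine ⟨L1 ++ (L2 ++ L3), ?_, ?_, ?_, ?_, ?_, ?_⟩
  · rw [List.Chain', List.isChain_append]
    refine ⟨by rw [hL1]; exact chain_climb m _ _, ?_, ?_⟩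
    · rw [List.isChain_append]
      refine ⟨hchainL2, by rw [hL3]; exact chain_climb m _ _, ?_⟩
      intro x hx y hy
      rw [hL2last] at hx
      simp only [Option.mem_def, Option.some.injEq] at hx
      subst hx
      rw [hL3head] at hy
      rcases Nat.eq_zero_or_pos a2 with h0 | h0
      · rw [if_pos h0] at hy; simp at hy
      · rw [if_neg (by omega)] at hy
        simp only [Option.mem_def, Option.some.injEq] at hy
        subst hy
        left; rfl
    · intro x hx y hy
      rw [hL1last] at hx
      simp only [Option.mem_def, Option.some.injEq] at hx
      subst hx
      rw [List.head?_append, hL2head] at hy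
      simp only [Option.some_or, Option.mem_def, Option.some.injEq] at hy
      subst hy
      right; omega
  · rw [List.nodup_append]
    refine ⟨by rw [hL1]; exact List.nodup_range', ?_, ?_⟩
    · rw [List.nodup_append]
      refine ⟨?_, by rw [hL3]; exact List.nodup_range', ?_⟩
      · rw [hL2]
        refine List.Nodup.map_on ?_ List.nodup_range
        intro k1 hk1 k2 hk2 heq
        rw [List.mem_range] at hk1 hk2
        simp only [hfdef] at heq
        have h2 : m * (b - 1 - k1) = m * (b - 1 - k2) := by omega
        have h3 := Nat.eq_of_mul_eq_mul_left (by omega : 0 < m) h2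
        omega
      · intro x hx y hx3 hxy
        subst hxy
        obtain ⟨k, hk, rfl⟩ := hL2mem x hx
        have h3 := hL3mem _ hx3
        rcases Nat.eq_zero_or_pos (b - 1 - k) with h0 | h0
        · rw [h0, Nat.mul_zero] at h3; omega
        · have hge : m ≤ m * (b - 1 - k) := Nat.le_mul_of_pos_right m h0
          omega
    · intro x hx y hx23 hxy
      subst hxy
      have h1 := hL1mem x hx
      rcases List.mem_append.mp hx23 with h | h
      · have := hL2bound x h; omega
      · have := hL3mem x h; omega
  · intro x hx
    rcases List.mem_append.mp hx with h | h
    · have := hL1mem x h; omega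
    · rcases List.mem_append.mp h with h' | h'
      · have := hL2bound x h'; omega
      · have := hL3mem x h'; omega
  · intro x hx
    rcases List.mem_append.mp hx with h | h
    · have := hL1mem x h; omega
    · rcases List.mem_append.mp h with h' | h'
      · have := hL2bound x h'; omega
      · have := hL3mem x h'; omega
  · rw [List.head?_append, hL1head]; rfl
  · rw [List.getLast?_append, List.getLast?_append, hL2last]
    rcases Nat.eq_zero_or_pos a2 with h0 | h0
    · have hnil : L3 = [] := by rw [hL3, h0]; rfl
      rw [hnil]
      show ((Option.none.or (some B)).or L1.getLast?) = some W
      simp only [Option.none_or]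
      show some B = some W
      exact congrArg some (by omega)
    · have hL3last : L3.getLast? = some (B + 1 + (a2 - 1)) := by
        rw [hL3]
        have ha2' : a2 = (a2 - 1) + 1 := by omega
        conv_lhs => rw [ha2']
        exact getLast?_range'_aux _ _
      rw [hL3last]
      show some (B + 1 + (a2 - 1)) = some W
      exact congrArg some (by omega)

end AuxPC

/-- If `n` is odd, `S ⊆ {1, …, n-1}`, `1 ∈ S`, and `S` contains an even
integer, then the proper connection number of the circulant digraph `C_n(S)`
is at most `2`. -/
theorem pc_circulant_le_two_of_even_elem (n : ℕ) (hodd : Odd n) (S : Finset ℕ)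
    (hS : S ⊆ Finset.Icc 1 (n - 1)) (h1 : 1 ∈ S) (heven : ∃ s ∈ S, Even s) :
    pc (circulantAdj n S) ≤ 2 := by
  obtain ⟨s, hsS, hse⟩ := heven
  have hs_mem := hS hsS
  have h1_mem := hS h1
  rw [Finset.mem_Icc] at hs_mem h1_mem
  have hnodd : n % 2 = 1 := Nat.odd_iff.mp hodd
  have hs0 : s % 2 = 0 := Nat.even_iff.mp hse
  have hn3 : 3 ≤ n := by omega
  have hs2 : 2 ≤ s := by omega
  set m := n - s with hmdef
  have hm1 : 1 ≤ m := by omega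
  have hmn : m ≤ n := by omega
  have hmn2 : m + 2 ≤ n := by omega
  have hmodd : m % 2 = 1 := by omega
  have hnms : n - m ∈ S := by
    have hmm : n - m = s := by omega
    rw [hmm]; exact hsS
  haveI : NeZero n := ⟨by omega⟩
  unfold pc
  refine Nat.sInf_le ?_
  refine ⟨fun i _ => 1 + i.val % 2, ?_, ?_⟩
  · intro x y _
    simp only [Finset.mem_Icc]
    omega
  · intro u v huv
    have hu : u.val < n := ZMod.val_lt u
    have hv : v.val < n := ZMod.val_lt v
    have hvals : u.val ≠ v.val := by
      intro h
      apply huv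
      have h2 : ((u.val : ℕ) : ZMod n) = ((v.val : ℕ) : ZMod n) := by rw [h]
      rwa [ZMod.natCast_rightInverse u, ZMod.natCast_rightInverse v] at h2
    rcases Nat.lt_or_ge u.val v.val with hlt | hge
    · refine master_list n (by omega) S m h1 hnms hmn hmodd u v
        (List.range' u.val (v.val - u.val + 1)) ?_ ?_ ?_ ?_ ?_
      · exact chain_climb m _ _
      · intro x hx; rw [List.mem_range'_1] at hx; omega
      · exact List.nodup_range'
      · rw [head?_range'_aux]; simp
      · rw [getLast?_range'_aux]
        exact congrArg some (by omega)
    · have hgt : v.val < u.val := by omega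
      set U := u.val with hUdef
      set W := v.val with hWdef
      set D := U - W with hDdef
      set r := D % m with hrdef
      have hrlt : r < m := Nat.mod_lt _ (by omega)
      set a := (m - r) % m with hadef
      have halt : a < m := Nat.mod_lt _ (by omega)
      have hdm := Nat.div_add_mod D m
      have hdvd0 : ∃ b, D + a = m * b := by
        rcases Nat.eq_zero_or_pos r with h0 | h0
        · refine ⟨D / m, ?_⟩
          have ha0 : a = 0 := by rw [hadef, h0, Nat.sub_zero, Nat.mod_self]
          omega
        · refine ⟨D / m + 1, ?_⟩
          have ha' : a = m - r := by rw [hadef]; exact Nat.mod_eq_of_lt (by omega)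
          have hms : m * (D / m + 1) = m * (D / m) + m := by ring
          omega
      by_cases hgood : a + U < n + W
      · obtain ⟨l, hc, hnd, hb1, hb2, hh, hl⟩ :=
          sawtooth n m U W a hm1 hgt hu halt hdvd0 hgood
        exact master_list n (by omega) S m h1 hnms hmn hmodd u v l hc hb1 hnd hh hl
      · obtain ⟨b, hb⟩ := hdvd0
        have hb2' : 2 ≤ b := by
          by_contra hcon
          have hble : b ≤ 1 := by omega
          have hle : m * b ≤ m * 1 := Nat.mul_le_mul_left m hble
          omega
        have hmbge : m * 2 ≤ m * b := Nat.mul_le_mul_left m hb2'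
        have hDm : m + 1 ≤ D := by omega
        set Z := W + m with hZdef
        have hZU : Z < U := by omega
        have hZn : Z < n := by omega
        have hdvdZ : ∃ b', U - Z + a = m * b' := by
          refine ⟨b - 1, ?_⟩
          have hmb : m * b = m * (b - 1) + m := by
            have hb1' : b - 1 + 1 = b := by omega
            calc m * b = m * ((b - 1) + 1) := by rw [hb1']
            _ = m * (b - 1) + m := by ring
          omega
        have hfitZ : a + U < n + Z := by omega
        obtain ⟨l, hc, hnd, hb1, hbmin, hh, hl⟩ :=
          sawtooth n m U Z a hm1 hZU hu halt hdvdZ hfitZ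
        refine master_list n (by omega) S m h1 hnms hmn hmodd u v (l ++ [W]) ?_ ?_ ?_ ?_ ?_
        · rw [List.Chain', List.isChain_append]
          refine ⟨hc, by simp, ?_⟩
          intro x hx y hy
          rw [hl] at hx
          simp only [Option.mem_def, Option.some.injEq] at hx
          subst hx
          simp only [List.head?_cons, Option.mem_def, Option.some.injEq] at hy
          subst hy
          right; omega
        · intro x hx
          rcases List.mem_append.mp hx with h | h
          · exact hb1 x h
          · simp only [List.mem_singleton] at h; omega
        · rw [List.nodup_append]
          refine ⟨hnd, by simp, ?_⟩
          intro x hx y hx2 hxy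
          simp only [List.mem_singleton] at hx2
          subst hx2
          have := hbmin _ hx
          omega
        · rw [List.head?_append, hh]; rfl
        · exact List.getLast?_concat
end

section
/- If D is a strong digraph such that the out-degree of every vertex equals its in-degree and the number of arcs of D is even, then the proper-walk connection number of D is at most 2. -/
open PCDigraph

namespace EulerAux

open Equiv

section Reach

variable {α : Type*} [Finite α]

/-- Reachability under iteration of a permutation. -/
def Reach (π : Equiv.Perm α) (x y : α) : Prop := ∃ n : ℕ, (π ^ n) x = y

lemma reach_refl (π : Equiv.Perm α) (x : α) : Reach π x x := ⟨0, rfl⟩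

lemma reach_trans {π : Equiv.Perm α} {x y z : α} (h1 : Reach π x y) (h2 : Reach π y z) :
    Reach π x z := by
  obtain ⟨m, hm⟩ := h1
  obtain ⟨n, hn⟩ := h2
  exact ⟨n + m, by rw [pow_add, Equiv.Perm.mul_apply, hm, hn]⟩

lemma reach_succ {π : Equiv.Perm α} {x y : α} (h : Reach π x y) : Reach π x (π y) := by
  obtain ⟨n, hn⟩ := h
  exact ⟨n + 1, by rw [pow_succ', Equiv.Perm.mul_apply, hn]⟩

lemma reach_symm {π : Equiv.Perm α} {x y : α} (h : Reach π x y) : Reach π y x := by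
  obtain ⟨n, hn⟩ := h
  have hm : 0 < orderOf π := orderOf_pos π
  refine ⟨n * (orderOf π - 1), ?_⟩
  rw [← hn, ← Equiv.Perm.mul_apply, ← pow_add]
  have h1 : n * (orderOf π - 1) + n = n * orderOf π := by
    obtain ⟨m', hm'⟩ : ∃ m', orderOf π = m' + 1 := ⟨orderOf π - 1, by omega⟩
    rw [hm', Nat.add_sub_cancel]
    ring
  rw [h1, mul_comm, pow_mul, pow_orderOf_eq_one]
  simp

lemma reach_merge [DecidableEq α] (π : Equiv.Perm α) {a b e₀ : α}
    (ha : Reach π e₀ a) (hb : ¬ Reach π e₀ b) :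
    (∀ y, Reach π e₀ y → Reach (Equiv.swap a b * π) e₀ y) ∧
      Reach (Equiv.swap a b * π) e₀ b := by
  set σ := Equiv.swap a b * π with hσ
  have happ : ∀ x, σ x = Equiv.swap a b (π x) := fun x => Equiv.Perm.mul_apply _ _ _
  have fact1 : ∀ x, π x ≠ a → π x ≠ b → σ x = π x := fun x h1 h2 => by
    rw [happ, Equiv.swap_apply_of_ne_of_ne h1 h2]
  have fact2 : ∀ x, π x = a → σ x = b := fun x h => by
    rw [happ, h, Equiv.swap_apply_left]
  have fact3 : ∀ x, π x = b → σ x = a := fun x h => by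
    rw [happ, h, Equiv.swap_apply_right]
  have hstep : ∀ n (y : α), π ((π ^ n) y) = (π ^ (n+1)) y := by
    intro n y
    rw [pow_succ', Equiv.Perm.mul_apply]
  have h1 : ∀ n, Reach σ e₀ ((π ^ n) e₀) ∨ Reach σ e₀ b := by
    intro n
    induction n with
    | zero => exact Or.inl ⟨0, by simp⟩
    | succ n ih =>
      rcases ih with ih | ih
      · by_cases hA : π ((π ^ n) e₀) = a
        · right
          have h := reach_succ ih
          rwa [fact2 _ hA] at h
        · by_cases hB : π ((π ^ n) e₀) = b
          · exact absurd ⟨n + 1, by rw [← hstep, hB]⟩ hb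
          · left
            have h := reach_succ ih
            rwa [fact1 _ hA hB, hstep] at h
      · exact Or.inr ih
  have hbb : Reach σ e₀ b := by
    have hpa : Reach π e₀ (π⁻¹ a) := by
      refine reach_trans ha (reach_symm ⟨1, ?_⟩)
      simp
    obtain ⟨n, hn⟩ := hpa
    rcases h1 n with h | h
    · rw [hn] at h
      have h2 := reach_succ h
      rwa [fact2 _ (by simp)] at h2
    · exact h
  have h2 : ∀ n, Reach σ e₀ ((π ^ n) b) := by
    intro n
    induction n with
    | zero => simpa using hbb
    | succ n ih =>
      by_cases hB : π ((π ^ n) b) = b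
      · rw [← hstep, hB]; exact hbb
      · by_cases hA : π ((π ^ n) b) = a
        · have hba : Reach π b a := ⟨n + 1, by rw [← hstep, hA]⟩
          exact absurd (reach_trans ha (reach_symm hba)) hb
        · have h := reach_succ ih
          rwa [fact1 _ hA hB, hstep] at h
  have haa : Reach σ e₀ a := by
    have hpb : Reach π b (π⁻¹ b) := by
      refine reach_symm ⟨1, ?_⟩
      simp
    obtain ⟨n, hn⟩ := hpb
    have h := reach_succ (hn ▸ h2 n)
    rwa [fact3 _ (by simp)] at h
  have h3 : ∀ n, Reach σ e₀ ((π ^ n) e₀) := by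
    intro n
    induction n with
    | zero => exact ⟨0, by simp⟩
    | succ n ih =>
      by_cases hA : π ((π ^ n) e₀) = a
      · rw [← hstep, hA]; exact haa
      · by_cases hB : π ((π ^ n) e₀) = b
        · exact absurd ⟨n + 1, by rw [← hstep, hB]⟩ hb
        · rw [← hstep, ← fact1 _ hA hB]
          exact reach_succ ih
  exact ⟨fun y hy => by obtain ⟨n, hn⟩ := hy; exact hn ▸ h3 n, hbb⟩

end Reach

open PCDigraph

variable {V : Type*} {Adj : V → V → Prop}

/-- The type of arcs of a digraph. -/
abbrev Arc (Adj : V → V → Prop) := {e : V × V // Adj e.1 e.2}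

lemma exists_adj_of_dwalk_ne {u v : V} (p : DWalk Adj u v) (h : u ≠ v) :
    ∃ w, Adj u w := by
  cases p with
  | nil => exact absurd rfl h
  | cons h' _ => exact ⟨_, h'⟩

lemma exists_adj_into_of_dwalk_ne : ∀ {u v : V}, DWalk Adj u v → u ≠ v → ∃ w, Adj w v
  | _, _, .nil, h => absurd rfl h
  | u, v, .cons (v := w) h' p, h => by
    by_cases hwv : w = v
    · exact ⟨u, hwv ▸ h'⟩
    · exact exists_adj_into_of_dwalk_ne p hwv

lemma exists_compat_perm [Fintype V] (Adj : V → V → Prop)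
    (hdeg : ∀ v : V, outDeg Adj v = inDeg Adj v) :
    ∃ π : Equiv.Perm (Arc Adj), ∀ e : Arc Adj, (π e).val.1 = e.val.2 := by
  classical
  have hcard : ∀ v : V, Fintype.card {w // Adj w v} = Fintype.card {w // Adj v w} := by
    intro v
    calc Fintype.card {w // Adj w v}
        = Set.ncard {w | Adj w v} := by
          rw [← Nat.card_eq_fintype_card]; exact Nat.card_coe_set_eq _
      _ = Set.ncard {w | Adj v w} := (hdeg v).symm
      _ = Fintype.card {w // Adj v w} := by
          rw [← Nat.card_eq_fintype_card]; exact (Nat.card_coe_set_eq _).symm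
  have σ : ∀ v : V, {w // Adj w v} ≃ {w // Adj v w} := fun v =>
    Fintype.equivOfCardEq (hcard v)
  refine ⟨⟨fun e => ⟨(e.val.2, (σ e.val.2 ⟨e.val.1, e.2⟩).val), (σ e.val.2 ⟨e.val.1, e.2⟩).2⟩,
    fun e => ⟨(((σ e.val.1).symm ⟨e.val.2, e.2⟩).val, e.val.1),
      ((σ e.val.1).symm ⟨e.val.2, e.2⟩).2⟩, ?_, ?_⟩, fun e => rfl⟩
  · intro e
    apply Subtype.ext
    show ((((σ e.val.2).symm (σ e.val.2 ⟨e.val.1, e.2⟩)).val, e.val.2) : V × V) = e.val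
    rw [Equiv.symm_apply_apply]
  · intro e
    apply Subtype.ext
    show (((e.val.1 : V), ((σ e.val.1) ((σ e.val.1).symm ⟨e.val.2, e.2⟩)).val) : V × V) = e.val
    rw [Equiv.apply_symm_apply]

lemma exists_euler_perm [Fintype V] (Adj : V → V → Prop)
    (hstrong : Strong Adj) (hdeg : ∀ v : V, outDeg Adj v = inDeg Adj v) (e₀ : Arc Adj) :
    ∃ π : Equiv.Perm (Arc Adj), (∀ e : Arc Adj, (π e).val.1 = e.val.2) ∧
      ∀ e : Arc Adj, Reach π e₀ e := by
  classical
  obtain ⟨π₀, hπ₀⟩ := exists_compat_perm Adj hdeg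
  have hne : Nonempty {π : Equiv.Perm (Arc Adj) // ∀ e, (π e).val.1 = e.val.2} := ⟨⟨π₀, hπ₀⟩⟩
  obtain ⟨πm, hπm⟩ := Finite.exists_max
    (fun π : {π : Equiv.Perm (Arc Adj) // ∀ e, (π e).val.1 = e.val.2} =>
      (Finset.univ.filter (fun e => Reach π.1 e₀ e)).card)
  refine ⟨πm.1, πm.2, ?_⟩
  by_contra hnot
  push_neg at hnot
  obtain ⟨b₀, hb₀⟩ := hnot
  have key : ∀ {x y : V} (_ : DWalk Adj x y), (∃ a : Arc Adj, Reach πm.1 e₀ a ∧ a.val.1 = x) →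
      (∃ a : Arc Adj, Reach πm.1 e₀ a ∧ a.val.1 = y) ∨
      (∃ a b : Arc Adj, Reach πm.1 e₀ a ∧ ¬ Reach πm.1 e₀ b ∧ a.val.1 = b.val.1) := by
    intro x y p
    induction p with
    | nil => exact fun h => Or.inl h
    | @cons x w y h q ih =>
      intro hx
      by_cases harc : Reach πm.1 e₀ ⟨(x, w), h⟩
      · exact ih ⟨πm.1 ⟨(x, w), h⟩, reach_succ harc, πm.2 _⟩
      · obtain ⟨a, ha, hax⟩ := hx
        exact Or.inr ⟨a, ⟨(x, w), h⟩, ha, harc, hax⟩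
  obtain ⟨p, -⟩ := hstrong e₀.val.2 b₀.val.1
  have hstart : ∃ a : Arc Adj, Reach πm.1 e₀ a ∧ a.val.1 = e₀.val.2 :=
    ⟨πm.1 e₀, reach_succ (reach_refl _ _), πm.2 e₀⟩
  obtain ⟨a, b, ha, hb, hab⟩ :
      ∃ a b : Arc Adj, Reach πm.1 e₀ a ∧ ¬ Reach πm.1 e₀ b ∧ a.val.1 = b.val.1 := by
    rcases key p hstart with ⟨a, ha, hax⟩ | h
    · exact ⟨a, b₀, ha, hb₀, hax⟩
    · exact h
  set σ : Equiv.Perm (Arc Adj) := Equiv.swap a b * πm.1 with hσdef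
  have hσcompat : ∀ e : Arc Adj, (σ e).val.1 = e.val.2 := by
    intro e
    have happ : σ e = Equiv.swap a b (πm.1 e) := Equiv.Perm.mul_apply _ _ _
    by_cases h1 : πm.1 e = a
    · rw [happ, h1, Equiv.swap_apply_left, ← hab, ← h1]
      exact πm.2 e
    · by_cases h2 : πm.1 e = b
      · rw [happ, h2, Equiv.swap_apply_right, hab, ← h2]
        exact πm.2 e
      · rw [happ, Equiv.swap_apply_of_ne_of_ne h1 h2]
        exact πm.2 e
  obtain ⟨hmono, hbb⟩ := reach_merge πm.1 ha hb
  have hlt : (Finset.univ.filter (fun e => Reach πm.1 e₀ e)).card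
      < (Finset.univ.filter (fun e => Reach σ e₀ e)).card := by
    apply Finset.card_lt_card
    rw [Finset.ssubset_iff_of_subset]
    · exact ⟨b, by simpa using hbb, by simpa using hb⟩
    · intro e he
      rw [Finset.mem_filter] at he ⊢
      exact ⟨he.1, hmono e he.2⟩
  exact absurd (hπm ⟨σ, hσcompat⟩) (not_le.mpr hlt)

end EulerAux


open EulerAux in
/-- If `D` is a strong digraph such that the out-degree of every vertex equals
its in-degree and the number of arcs of `D` is even, then the proper-walk
connection number of `D` is at most `2`. -/
theorem wc_le_two_of_eulerian_even_arcs {V : Type*} [Fintype V] (Adj : V → V → Prop)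
    (hloopless : ∀ v : V, ¬ Adj v v) (hstrong : Strong Adj)
    (hdeg : ∀ v : V, outDeg Adj v = inDeg Adj v)
    (harcs : Even {e : V × V | Adj e.1 e.2}.ncard) :
    wc Adj ≤ 2 := by
  classical
  unfold wc
  apply Nat.sInf_le
  by_cases htriv : ∀ u v : V, u = v
  · have h1 : (1 : ℕ) ∈ Finset.Icc 1 2 := by decide
    exact ⟨fun _ _ => 1, fun _ _ _ => h1, fun u v huv => absurd (htriv u v) huv⟩
  push_neg at htriv
  obtain ⟨u₀, v₀, hu₀v₀⟩ := htriv
  obtain ⟨p₀, -⟩ := hstrong u₀ v₀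
  obtain ⟨w₀, hw₀⟩ := exists_adj_of_dwalk_ne p₀ hu₀v₀
  set e₀ : Arc Adj := ⟨(u₀, w₀), hw₀⟩ with he₀
  obtain ⟨π, hcompat, horb⟩ := exists_euler_perm Adj hstrong hdeg e₀
  set M := Fintype.card (Arc Adj) with hMdef
  have hMpos : 0 < M := Fintype.card_pos_iff.mpr ⟨e₀⟩
  have hMeven : Even M := by
    have h1 : Nat.card (Arc Adj) = Set.ncard {e : V × V | Adj e.1 e.2} :=
      Nat.card_coe_set_eq _
    rw [hMdef, ← Nat.card_eq_fintype_card, h1]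
    exact harcs
  have hfix : ∀ d : ℕ, (π ^ d) e₀ = e₀ → ∀ q : ℕ, ((π ^ d) ^ q) e₀ = e₀ := by
    intro d hd q
    induction q with
    | zero => simp
    | succ q ih => rw [pow_succ, Equiv.Perm.mul_apply, hd, ih]
  have hinj : ∀ i j : ℕ, i < M → j < M → (π ^ i) e₀ = (π ^ j) e₀ → i = j := by
    suffices h : ∀ i j : ℕ, i ≤ j → j < M → (π ^ i) e₀ = (π ^ j) e₀ → i = j by
      intro i j hi hj hij
      rcases le_total i j with h' | h'
      · exact h i j h' hj hij
      · exact (h j i h' hi hij.symm).symm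
    intro i j hij hj heq
    by_contra hne
    have hd : (π ^ (j - i)) e₀ = e₀ := by
      have h2 : (π ^ i) ((π ^ (j - i)) e₀) = (π ^ i) e₀ := by
        rw [← Equiv.Perm.mul_apply, ← pow_add, Nat.add_sub_cancel' hij, heq]
      exact Equiv.injective _ h2
    have hdpos : 0 < j - i := by omega
    have hdlt : j - i < M := by omega
    have hsurj : Function.Surjective (fun x : Fin (j - i) => (π ^ (x : ℕ)) e₀) := by
      intro e
      obtain ⟨n, hn⟩ := horb e
      refine ⟨⟨n % (j - i), Nat.mod_lt _ hdpos⟩, ?_⟩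
      have h3 : (π ^ n) e₀ = (π ^ (n % (j - i))) e₀ := by
        conv_lhs => rw [← Nat.mod_add_div n (j - i)]
        rw [pow_add, Equiv.Perm.mul_apply, pow_mul, hfix _ hd]
      show (π ^ (n % (j - i))) e₀ = e
      rw [← h3, hn]
    have h4 := Fintype.card_le_of_surjective _ hsurj
    simp only [Fintype.card_fin] at h4
    omega
  have hginj : Function.Injective (fun x : Fin M => (π ^ (x : ℕ)) e₀) := by
    intro i j h
    exact Fin.ext (hinj i j i.2 j.2 h)
  have hgbij : Function.Bijective (fun x : Fin M => (π ^ (x : ℕ)) e₀) :=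
    (Fintype.bijective_iff_injective_and_card _).mpr ⟨hginj, by simp [hMdef]⟩
  set g : Fin M ≃ Arc Adj := Equiv.ofBijective _ hgbij with hgdef
  have hgapp : ∀ x : Fin M, g x = (π ^ (x : ℕ)) e₀ := fun _ => rfl
  have hgsymm : ∀ e : Arc Adj, (π ^ ((g.symm e : Fin M) : ℕ)) e₀ = e := by
    intro e
    have h := hgapp (g.symm e)
    rw [Equiv.apply_symm_apply] at h
    exact h.symm
  have hM0 : (π ^ M) e₀ = e₀ := by
    obtain ⟨j, hj⟩ := hgbij.2 ((π ^ M) e₀)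
    simp only at hj
    by_cases hj0 : (j : ℕ) = 0
    · rw [← hj, hj0]; simp
    · exfalso
      have h5 : (π ^ (j : ℕ)) ((π ^ (M - (j : ℕ))) e₀) = (π ^ (j : ℕ)) e₀ := by
        rw [← Equiv.Perm.mul_apply, ← pow_add, Nat.add_sub_cancel' (le_of_lt j.2), hj]
      have h6 := Equiv.injective _ h5
      have h7 := hinj (M - (j : ℕ)) 0 (by omega) hMpos (by simpa using h6)
      have := j.2
      omega
  set pos : Arc Adj → ℕ := fun e => ((g.symm e : Fin M) : ℕ) with hposdef
  have hpos_lt : ∀ e : Arc Adj, pos e < M := fun e => (g.symm e).2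
  have hstep : ∀ e : Arc Adj, pos (π e) = (pos e + 1) % M := by
    intro e
    have he : (π ^ (pos e)) e₀ = e := hgsymm e
    have hπe : (π ^ (pos e + 1)) e₀ = π e := by
      rw [pow_succ', Equiv.Perm.mul_apply, he]
    by_cases hlt : pos e + 1 < M
    · have h8 : g ⟨pos e + 1, hlt⟩ = π e := hπe
      have h9 : g.symm (π e) = ⟨pos e + 1, hlt⟩ := by rw [← h8, Equiv.symm_apply_apply]
      have h10 : pos (π e) = pos e + 1 := by
        show ((g.symm (π e) : Fin M) : ℕ) = pos e + 1
        rw [h9]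
      rw [h10, Nat.mod_eq_of_lt hlt]
    · have hEq : pos e + 1 = M := by have := hpos_lt e; omega
      have h8 : g ⟨0, hMpos⟩ = π e := by
        show (π ^ (0 : ℕ)) e₀ = π e
        rw [pow_zero, ← hπe, hEq, hM0]
        simp
      have h9 : g.symm (π e) = ⟨0, hMpos⟩ := by rw [← h8, Equiv.symm_apply_apply]
      have h10 : pos (π e) = 0 := by
        show ((g.symm (π e) : Fin M) : ℕ) = 0
        rw [h9]
      rw [h10, hEq, Nat.mod_self]
  set colour : Arc Adj → ℕ := fun e => pos e % 2 + 1 with hcolourdef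
  have halt : ∀ e : Arc Adj, colour (π e) ≠ colour e := by
    intro e
    have h1 := hstep e
    have h2 := hpos_lt e
    obtain ⟨m, hm⟩ := hMeven
    simp only [hcolourdef]
    by_cases hlt : pos e + 1 < M
    · rw [h1, Nat.mod_eq_of_lt hlt]; omega
    · have hEq : pos e + 1 = M := by omega
      rw [h1, hEq, Nat.mod_self]
      omega
  set c : V → V → ℕ := fun u v => if h : Adj u v then colour ⟨(u, v), h⟩ else 1 with hcdef
  have hc : ∀ e : Arc Adj, c e.val.1 e.val.2 = colour e := by
    intro e
    simp only [hcdef]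
    rw [dif_pos e.2]
  have chain_ex : ∀ (k : ℕ) (e : Arc Adj),
      ∃ p : DWalk Adj e.val.1 (((π ^ k) e).val.2),
        p.arcs = (List.range (k + 1)).map (fun i => ((π ^ i) e).val) := by
    intro k
    induction k with
    | zero =>
      intro e
      rw [pow_zero]
      refine ⟨DWalk.cons e.2 DWalk.nil, ?_⟩
      have hr1 : List.range 1 = [0] := rfl
      simp [DWalk.arcs, hr1, pow_zero, Equiv.Perm.one_apply]
    | succ k ih =>
      intro e
      obtain ⟨p, hp⟩ := ih (π e)
      have h1 : Adj e.val.1 (π e).val.1 := by rw [hcompat e]; exact e.2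
      have hre : (π ^ (k + 1)) e = (π ^ k) (π e) := by
        rw [pow_succ, Equiv.Perm.mul_apply]
      rw [hre]
      refine ⟨DWalk.cons h1 p, ?_⟩
      show ((e.val.1, (π e).val.1) : V × V) :: p.arcs = _
      conv_rhs => rw [List.range_succ_eq_map, List.map_cons, List.map_map]
      rw [hp]
      congr 1
      rw [hcompat e, pow_zero, Equiv.Perm.one_apply]
  refine ⟨c, ?_, ?_⟩
  · intro u v huv
    simp only [hcdef]
    rw [dif_pos huv, Finset.mem_Icc, hcolourdef]
    simp only
    omega
  · intro u v huv
    obtain ⟨p₁, -⟩ := hstrong u v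
    obtain ⟨w₁, hw₁⟩ := exists_adj_of_dwalk_ne p₁ huv
    obtain ⟨w₂, hw₂⟩ := exists_adj_into_of_dwalk_ne p₁ huv
    have hreach : Reach π (⟨(u, w₁), hw₁⟩ : Arc Adj) (⟨(w₂, v), hw₂⟩ : Arc Adj) :=
      reach_trans (reach_symm (horb _)) (horb _)
    obtain ⟨k, hk⟩ := hreach
    have hce := chain_ex k ⟨(u, w₁), hw₁⟩
    rw [hk] at hce
    obtain ⟨p, hparcs⟩ := hce
    refine ⟨p, ?_⟩
    unfold ProperlyColoured
    rw [hparcs, List.map_map, List.Chain', List.isChain_map, List.isChain_range_succ]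
    intro m hm
    show c ((π ^ m) _).val.1 ((π ^ m) _).val.2 ≠ c ((π ^ (m + 1)) _).val.1 ((π ^ (m + 1)) _).val.2
    rw [hc, hc]
    have h2 : (π ^ (m + 1)) (⟨(u, w₁), hw₁⟩ : Arc Adj)
        = π ((π ^ m) (⟨(u, w₁), hw₁⟩ : Arc Adj)) := by
      rw [pow_succ', Equiv.Perm.mul_apply]
    rw [h2]
    exact (halt _).symm
end

section
/- Let D be a Hamiltonian digraph and C a Hamiltonian cycle of D. If for every vertex v of D there is an even chord of C with tail v, then D has a strong 2-partition. -/
open PCDigraph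

section AuxWalk

variable {V : Type*} {Adj : V → V → Prop}

/-- Concatenation of directed walks. -/
def dappend : ∀ {u v w : V}, DWalk Adj u v → DWalk Adj v w → DWalk Adj u w
  | _, _, _, .nil, q => q
  | _, _, _, .cons h p, q => .cons h (dappend p q)

lemma aux_suffix_path : ∀ {a b : V} (p : DWalk Adj a b), p.IsPath →
    ∀ {u : V}, u ∈ p.support → ∃ q : DWalk Adj u b, q.IsPath := by
  intro a b p
  induction p with
  | @nil c =>
    intro hp u hu
    have h1 : u = c := by simpa [DWalk.support] using hu
    subst h1
    exact ⟨.nil, hp⟩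
  | @cons c d b' h p ih =>
    intro hp u hu
    have hp2 : c ∉ p.support ∧ p.IsPath := by
      simpa [DWalk.IsPath, DWalk.support, List.nodup_cons] using hp
    have h1 : u = c ∨ u ∈ p.support := by simpa [DWalk.support] using hu
    rcases h1 with rfl | hu'
    · exact ⟨.cons h p, hp⟩
    · exact ih hp2.2 hu'

lemma aux_exists_path : ∀ {a b : V} (w : DWalk Adj a b), ∃ p : DWalk Adj a b, p.IsPath := by
  intro a b w
  induction w with
  | nil => exact ⟨.nil, by simp [DWalk.IsPath, DWalk.support]⟩
  | @cons c d b' h p ih =>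
    obtain ⟨p', hp'⟩ := ih
    by_cases hu : c ∈ p'.support
    · exact aux_suffix_path p' hp' hu
    · refine ⟨.cons h p', ?_⟩
      simp only [DWalk.IsPath, DWalk.support, List.nodup_cons]
      exact ⟨hu, hp'⟩

end AuxWalk

section AuxReach

/-- Reachability along the Hamiltonian cycle with the arc `m → m+1` deleted,
together with the chords `v → g v`. -/
inductive AuxReach {n : ℕ} (g : ZMod n → ZMod n) (m : ZMod n) : ZMod n → Prop
  | base : AuxReach g m m
  | cyc {v : ZMod n} : AuxReach g m v → v ≠ m → AuxReach g m (v + 1)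
  | chord {v : ZMod n} : AuxReach g m v → AuxReach g m (g v)

variable {n : ℕ} [NeZero n]

lemma aux_val_sub_one {a : ZMod n} (ha : a ≠ 0) : (a - 1).val = a.val - 1 := by
  have h1 : 1 ≤ a.val := Nat.one_le_iff_ne_zero.mpr (fun h => ha ((ZMod.val_eq_zero a).mp h))
  have h2 : a - 1 = ((a.val - 1 : ℕ) : ZMod n) := by
    conv_lhs => rw [← ZMod.natCast_zmod_val a]
    push_cast [h1]
    ring
  rw [h2, ZMod.val_cast_of_lt]
  have := ZMod.val_lt a
  omega

lemma aux_reach_cycle {g : ZMod n → ZMod n} {m : ZMod n} :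
    ∀ (k : ℕ) {v : ZMod n}, AuxReach g m v → k ≤ (m - v).val →
      AuxReach g m (v + (k : ZMod n)) := by
  intro k
  induction k with
  | zero => intro v h _; simpa using h
  | succ k ih =>
    intro v h hk
    have hvm : v ≠ m := by
      rintro rfl
      simp at hk
    have hne : m - v ≠ 0 := sub_ne_zero.mpr (Ne.symm hvm)
    have h1 : AuxReach g m (v + 1) := .cyc h hvm
    have h2 : k ≤ (m - (v + 1)).val := by
      have h3 : m - (v + 1) = (m - v) - 1 := by ring
      rw [h3, aux_val_sub_one hne]
      omega
    have h4 := ih h1 h2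
    have heq : v + ((k + 1 : ℕ) : ZMod n) = (v + 1) + (k : ZMod n) := by
      push_cast
      ring
    rwa [heq]

lemma aux_exists_reach (hn : 2 ≤ n) (g : ZMod n → ZMod n) (hg : ∀ i, g i ≠ i) :
    ∃ m : ZMod n, AuxReach g m (m + 1) := by
  classical
  by_contra hcon
  push_neg at hcon
  haveI : Fact (1 < n) := ⟨hn⟩
  haveI : Nonempty (ZMod n) := ⟨0⟩
  set F : ZMod n → Finset (ZMod n) :=
    fun m => Finset.univ.filter (fun v => AuxReach g m v) with hF
  obtain ⟨m, -, hmin⟩ := Finset.exists_min_image Finset.univ (fun m => (F m).card)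
    Finset.univ_nonempty
  have hsub : ∀ v, AuxReach g (m - 1) v → AuxReach g m v ∧ v ≠ m := by
    intro v hv
    induction hv with
    | base =>
      constructor
      · have h1 : AuxReach g m (g m) := .chord .base
        have hne : m - g m ≠ 0 := sub_ne_zero.mpr (Ne.symm (hg m))
        have h2 := aux_reach_cycle ((m - 1 - g m).val) h1 (by
          have h3 : m - 1 - g m = (m - g m) - 1 := by ring
          rw [h3, aux_val_sub_one hne]
          omega)
        have heq : g m + (((m - 1 - g m).val : ℕ) : ZMod n) = m - 1 := by
          rw [ZMod.natCast_zmod_val]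
          ring
        rwa [heq] at h2
      · intro h
        have h1 : (1 : ZMod n) = 0 := by linear_combination -h
        exact one_ne_zero h1
    | cyc hr hne ih =>
      refine ⟨.cyc ih.1 ih.2, ?_⟩
      intro h
      exact hne (by linear_combination h)
    | @chord v' hr ih =>
      refine ⟨.chord ih.1, ?_⟩
      intro h
      apply hcon (m - 1)
      have h2 := AuxReach.chord hr
      rw [h] at h2
      have h4 : (m - 1) + 1 = m := by ring
      rw [h4]
      exact h2
  have hset : F (m - 1) ⊆ (F m).erase m := by
    intro v hv
    rw [hF] at hv
    simp only [Finset.mem_filter, Finset.mem_univ, true_and] at hv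
    obtain ⟨h1, h2⟩ := hsub v hv
    simp only [Finset.mem_erase, hF, Finset.mem_filter, Finset.mem_univ, true_and]
    exact ⟨h2, h1⟩
  have hmF : m ∈ F m := by
    simp only [hF, Finset.mem_filter, Finset.mem_univ, true_and]
    exact .base
  have h1 : (F (m - 1)).card ≤ (F m).card - 1 := by
    calc (F (m - 1)).card ≤ ((F m).erase m).card := Finset.card_le_card hset
    _ = (F m).card - 1 := Finset.card_erase_of_mem hmF
  have h2 := hmin (m - 1) (Finset.mem_univ _)
  have h3 : 1 ≤ (F m).card := Finset.card_pos.mpr ⟨m, hmF⟩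
  omega

end AuxReach

section AuxConstruct

/-- The main construction: given a Hamiltonian cycle enumerated by `x` on `ZMod n`
(`n ≥ 3`) and an even chord `i → g i` at every vertex, the digraph has a strong
2-partition. -/
lemma aux_construct {V : Type*} (n : ℕ) [NeZero n] (hn3 : 3 ≤ n)
    (Adj : V → V → Prop) (x : ZMod n → V) (hbij : Function.Bijective x)
    (hcyc : ∀ i : ZMod n, Adj (x i) (x (i + 1)))
    (g : ZMod n → ZMod n) (hgadj : ∀ i, Adj (x i) (x (g i)))
    (hgeven : ∀ i, Even ((g i - i).val)) (hgne : ∀ i, g i ≠ i) :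
    HasStrongTwoPartition Adj := by
  classical
  haveI : Fact (1 < n) := ⟨by omega⟩
  -- the defect position `m`
  obtain ⟨m, hm⟩ : ∃ m : ZMod n, Even n ∨ (Odd n ∧ AuxReach g m (m + 1)) := by
    rcases Nat.even_or_odd n with he | ho
    · exact ⟨0, Or.inl he⟩
    · obtain ⟨m, hr⟩ := aux_exists_reach (by omega) g hgne
      exact ⟨m, Or.inr ⟨ho, hr⟩⟩
  -- the 2-partition
  set e : ZMod n ≃ V := Equiv.ofBijective x hbij with he
  have hsymm : ∀ i : ZMod n, e.symm (x i) = i := fun i => e.symm_apply_apply i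
  set P : ZMod n → Prop := fun i => Even ((i - m - 1).val) with hP
  set V₁ : Set V := {u | P (e.symm u)} with hV₁
  set A : V → V → Prop :=
    fun u v => Adj u v ∧ ((u ∈ V₁ ∧ v ∈ V₁ᶜ) ∨ (u ∈ V₁ᶜ ∧ v ∈ V₁)) with hA
  -- crossing arcs
  have hcross : ∀ i j : ZMod n, Adj (x i) (x j) → (P i ↔ ¬ P j) → A (x i) (x j) := by
    intro i j hadj hpij
    refine ⟨hadj, ?_⟩
    have h1 : (P i ∧ ¬ P j) ∨ (¬ P i ∧ P j) := by tauto
    rcases h1 with ⟨h1, h2⟩ | ⟨h1, h2⟩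
    · exact Or.inl ⟨by simp [hV₁, hsymm, h1], by simp [hV₁, hsymm, h2]⟩
    · exact Or.inr ⟨by simp [hV₁, hsymm, h1], by simp [hV₁, hsymm, h2]⟩
  -- parity flips along non-defect cycle arcs
  have hstepP : ∀ i : ZMod n, i ≠ m → (P i ↔ ¬ P (i + 1)) := by
    intro i him
    have hneg1 : ((n - 1 : ℕ) : ZMod n) = -1 := by
      have h1 : ((n - 1 : ℕ) : ZMod n) = (n : ZMod n) - 1 := by
        rw [Nat.cast_sub (by omega)]
        simp
      rw [h1, ZMod.natCast_self]
      ring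
    have haval : (i - m - 1).val ≠ n - 1 := by
      intro h
      apply him
      have h2 : i - m - 1 = ((n - 1 : ℕ) : ZMod n) := by
        rw [← h, ZMod.natCast_zmod_val]
      rw [hneg1] at h2
      linear_combination h2
    have hval1 : (1 : ZMod n).val = 1 := ZMod.val_one n
    have hvlt := ZMod.val_lt (i - m - 1)
    have hval : (i + 1 - m - 1).val = (i - m - 1).val + 1 := by
      have heq : (i + 1 - m - 1) = (i - m - 1) + 1 := by ring
      rw [heq, ZMod.val_add_of_lt (by omega)]
      omega
    simp only [hP, hval]
    simp [Nat.even_add_one]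
  have hstepA : ∀ i : ZMod n, i ≠ m → A (x i) (x (i + 1)) :=
    fun i him => hcross i (i + 1) (hcyc i) (hstepP i him)
  -- walks along the cycle avoiding the defect arc
  have hwalk : ∀ (k : ℕ) (i : ZMod n), k ≤ (m - i).val →
      Nonempty (DWalk A (x i) (x (i + (k : ZMod n)))) := by
    intro k
    induction k with
    | zero =>
      intro i _
      have h0 : i + ((0 : ℕ) : ZMod n) = i := by norm_num
      rw [h0]
      exact ⟨.nil⟩
    | succ k ih =>
      intro i hk
      have him : i ≠ m := by
        rintro rfl
        rw [sub_self, ZMod.val_zero] at hk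
        omega
      have hnz : m - i ≠ 0 := sub_ne_zero.mpr (Ne.symm him)
      have hk' : k ≤ (m - (i + 1)).val := by
        have h1 : m - (i + 1) = (m - i) - 1 := by ring
        rw [h1, aux_val_sub_one hnz]
        omega
      obtain ⟨w⟩ := ih (i + 1) hk'
      have heq : i + ((k + 1 : ℕ) : ZMod n) = (i + 1) + (k : ZMod n) := by
        push_cast
        ring
      rw [heq]
      exact ⟨.cons (hstepA i him) w⟩
  have hvalneg1 : (-1 : ZMod n).val = n - 1 := by
    have h1 : ((n - 1 : ℕ) : ZMod n) = (n : ZMod n) - 1 := by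
      rw [Nat.cast_sub (by omega)]
      simp
    have h2 : ((n - 1 : ℕ) : ZMod n) = -1 := by
      rw [h1, ZMod.natCast_self]
      ring
    rw [← h2, ZMod.val_cast_of_lt (by omega)]
  -- sum of positions formula
  have hsum : ∀ v : ZMod n, (v - m - 1).val + (m - v).val = n - 1 := by
    intro v
    have h1 : (v - m - 1) + (m - v) = (-1 : ZMod n) := by ring
    have h2 : ((v - m - 1) + (m - v)).val = ((v - m - 1).val + (m - v).val) % n :=
      ZMod.val_add _ _
    rw [h1, hvalneg1] at h2
    have h3 := ZMod.val_lt (v - m - 1)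
    have h4 := ZMod.val_lt (m - v)
    rcases Nat.lt_or_ge ((v - m - 1).val + (m - v).val) n with h5 | h5
    · rw [Nat.mod_eq_of_lt h5] at h2
      omega
    · rw [Nat.mod_eq_sub_mod h5, Nat.mod_eq_of_lt (by omega)] at h2
      omega
  -- the key walk from `x m` to `x (m+1)`
  have hkeywalk : Nonempty (DWalk A (x m) (x (m + 1))) := by
    rcases hm with heven | ⟨hodd, hreach⟩
    · refine ⟨.cons (hcross m (m + 1) (hcyc m) ?_) .nil⟩
      have h1 : (m - m - 1) = (-1 : ZMod n) := by ring
      have h2 : (m + 1 - m - 1) = (0 : ZMod n) := by ring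
      simp only [hP, h1, h2, hvalneg1, ZMod.val_zero]
      have ho : ¬ Even (n - 1) := by
        obtain ⟨t, ht⟩ := heven
        simp only [Nat.even_iff]
        omega
      simpa using ho
    · have main : ∀ v : ZMod n, AuxReach g m v → Nonempty (DWalk A (x m) (x v)) := by
        intro v hv
        induction hv with
        | base => exact ⟨.nil⟩
        | cyc hr hvne ih =>
          obtain ⟨w⟩ := ih
          exact ⟨dappend w (.cons (hstepA _ hvne) .nil)⟩
        | @chord v' hr ih =>
          obtain ⟨w⟩ := ih
          rcases le_or_gt ((g v' - v').val) ((m - v').val) with hle | hlt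
          · obtain ⟨w2⟩ := hwalk ((g v' - v').val) v' hle
            have heq : v' + (((g v' - v').val : ℕ) : ZMod n) = g v' := by
              rw [ZMod.natCast_zmod_val]
              ring
            rw [heq] at w2
            exact ⟨dappend w w2⟩
          · refine ⟨dappend w (.cons (hcross v' (g v') (hgadj v') ?_) .nil)⟩
            have hb : (g v' - m - 1).val = ((v' - m - 1).val + (g v' - v').val) % n := by
              rw [show g v' - m - 1 = (v' - m - 1) + (g v' - v') from by ring, ZMod.val_add]
            have h3 := ZMod.val_lt (v' - m - 1)
            have h4 := ZMod.val_lt (g v' - v')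
            have h5 := hsum v'
            have hcov : n ≤ (v' - m - 1).val + (g v' - v').val := by omega
            have hb' : (g v' - m - 1).val = (v' - m - 1).val + (g v' - v').val - n := by
              rw [Nat.mod_eq_sub_mod hcov, Nat.mod_eq_of_lt (by omega)] at hb
              omega
            obtain ⟨t, ht⟩ := hodd
            obtain ⟨c, hc⟩ := hgeven v'
            simp only [hP, Nat.even_iff, hb']
            omega
      exact main (m + 1) hreach
  -- conclude strongness
  refine ⟨V₁, V₁ᶜ, Set.union_compl_self _, disjoint_compl_right, ?_⟩
  intro u v
  have hxi : x (e.symm u) = u := e.apply_symm_apply u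
  have hxj : x (e.symm v) = v := e.apply_symm_apply v
  set i := e.symm u with hi
  set j := e.symm v with hj
  obtain ⟨w1⟩ := hwalk ((m - i).val) i le_rfl
  have heq1 : i + (((m - i).val : ℕ) : ZMod n) = m := by
    rw [ZMod.natCast_zmod_val]
    ring
  rw [heq1] at w1
  obtain ⟨w2⟩ := hkeywalk
  have hb3 : (j - (m + 1)).val ≤ (m - (m + 1)).val := by
    have h1 : m - (m + 1) = (-1 : ZMod n) := by ring
    rw [h1, hvalneg1]
    have h2 := ZMod.val_lt (j - (m + 1))
    omega
  obtain ⟨w3⟩ := hwalk ((j - (m + 1)).val) (m + 1) hb3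
  have heq3 : (m + 1) + (((j - (m + 1)).val : ℕ) : ZMod n) = j := by
    rw [ZMod.natCast_zmod_val]
    ring
  rw [heq3] at w3
  obtain ⟨pth, hpth⟩ := aux_exists_path (dappend w1 (dappend w2 w3))
  rw [← hxi, ← hxj]
  exact ⟨pth, hpth⟩

end AuxConstruct

/-- Let `D` be a Hamiltonian digraph
If for every vertex `v` of `D` there is an even chord of `C` with tail `v`,
then `D` has a strong 2-partition. -/
theorem strongTwoPartition_of_even_chord_tail {V : Type*} [Fintype V]
    (Adj : V → V → Prop) (hloopless : ∀ v : V, ¬ Adj v v)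
    (x : ZMod (Fintype.card V) → V) (hC : IsHamCycle Adj x)
    (hchord : ∀ v : V, ∃ p q : ZMod (Fintype.card V),
      x p = v ∧ IsChord Adj x p q ∧ Even (chordLength (V := V) p q)) :
    HasStrongTwoPartition Adj := by
  classical
  have hne0 : Fintype.card V ≠ 0 := by
    intro h
    haveI : IsEmpty V := Fintype.card_eq_zero_iff.mp h
    exact IsEmpty.elim ‹IsEmpty V› (x 0)
  haveI : NeZero (Fintype.card V) := ⟨hne0⟩
  have hne1 : Fintype.card V ≠ 1 := by
    intro h
    haveI : Subsingleton (ZMod (Fintype.card V)) := by rw [h]; infer_instance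
    have h0 : (0 : ZMod (Fintype.card V)) + 1 = 0 := Subsingleton.elim _ _
    have h1 := hC.2 0
    rw [h0] at h1
    exact hloopless _ h1
  have hne2 : Fintype.card V ≠ 2 := by
    intro h
    obtain ⟨p, q, -, hch, hev⟩ := hchord (x 0)
    obtain ⟨hadj, -⟩ : Adj (x p) (x q) ∧ q ≠ p + 1 := hch
    have hev' : Even ((q - p).val) := hev
    have hval : (q - p).val < Fintype.card V := ZMod.val_lt _
    have h0 : (q - p).val = 0 := by
      obtain ⟨c, hc⟩ := hev'
      omega
    have hqp : q = p := by
      have h1 := (ZMod.val_eq_zero (q - p)).mp h0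
      linear_combination h1
    rw [hqp] at hadj
    exact hloopless _ hadj
  -- choose the even chords
  choose p q hxp hchd hev using fun i : ZMod (Fintype.card V) => hchord (x i)
  have hpi : ∀ i, p i = i := fun i => hC.1.injective (hxp i)
  have hgadj : ∀ i, Adj (x i) (x (q i)) := by
    intro i
    obtain ⟨hadj, -⟩ : Adj (x (p i)) (x (q i)) ∧ q i ≠ p i + 1 := hchd i
    rwa [hpi i] at hadj
  have hgeven : ∀ i, Even ((q i - i).val) := by
    intro i
    have h1 : Even ((q i - p i).val) := hev i
    rwa [hpi i] at h1
  have hgne : ∀ i, q i ≠ i := by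
    intro i h
    have h1 := hgadj i
    rw [h] at h1
    exact hloopless _ h1
  exact aux_construct (Fintype.card V) (by omega) Adj x hC.1 hC.2 q hgadj hgeven hgne
end

section
/- Every Hamiltonian digraph of even order at least 4 has proper connection number at most 2. -/
namespace PCDigraph

/-- Walk along a Hamiltonian cycle: from `x i`, take `k` steps. -/
lemma exists_cycWalk {V : Type*} {Adj : V → V → Prop} {n : ℕ}
    (x : ZMod n → V) (hx : ∀ i : ZMod n, Adj (x i) (x (i + 1))) :
    ∀ (k : ℕ) (i : ZMod n),
      ∃ p : DWalk Adj (x i) (x (i + (k : ZMod n))),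
        p.support = (List.range (k + 1)).map (fun t : ℕ => x (i + (t : ZMod n))) ∧
        p.arcs = (List.range k).map
          (fun t : ℕ => (x (i + (t : ZMod n)), x (i + (t : ZMod n) + 1))) := by
  intro k
  induction k with
  | zero =>
    intro i
    have h0 : ((0:ℕ) : ZMod n) = 0 := Nat.cast_zero
    rw [show i + ((0:ℕ) : ZMod n) = i by rw [h0, add_zero]]
    refine ⟨.nil, ?_, by simp [DWalk.arcs]⟩
    rw [DWalk.support, show List.range 1 = [0] from rfl, List.map_singleton, h0, add_zero]
  | succ k ih =>
    intro i
    obtain ⟨p, hps, hpa⟩ := ih (i + 1)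
    have he : i + ((k + 1 : ℕ) : ZMod n) = (i + 1) + (k : ZMod n) := by
      push_cast; ring
    rw [he]
    refine ⟨.cons (hx i) p, ?_, ?_⟩
    · rw [DWalk.support, hps]
      conv_rhs => rw [List.range_succ_eq_map]
      rw [List.map_cons, List.map_map]
      refine congrArg₂ List.cons ?_ (List.map_congr_left fun t _ => ?_)
      · rw [show i + ((0 : ℕ) : ZMod n) = i by push_cast; ring]
      · simp only [Function.comp_apply, Nat.succ_eq_add_one]
        rw [show i + ((t + 1 : ℕ) : ZMod n) = i + 1 + (t : ZMod n) by push_cast; ring]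
    · rw [DWalk.arcs, hpa]
      conv_rhs => rw [List.range_succ_eq_map]
      rw [List.map_cons, List.map_map]
      refine congrArg₂ List.cons ?_ (List.map_congr_left fun t _ => ?_)
      · rw [show i + ((0 : ℕ) : ZMod n) = i by push_cast; ring]
      · simp only [Function.comp_apply, Nat.succ_eq_add_one]
        rw [show i + ((t + 1 : ℕ) : ZMod n) = i + 1 + (t : ZMod n) by push_cast; ring]

lemma parity_flip {n : ℕ} [NeZero n] (hn : Even n) (j : ZMod n) :
    (j + 1).val % 2 ≠ j.val % 2 := by
  have h1 : (j + 1).val = (j.val + (1 : ZMod n).val) % n := ZMod.val_add j 1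
  have hpos : 0 < n := Nat.pos_of_ne_zero (NeZero.ne n)
  obtain ⟨m, hm⟩ := hn
  have hn2 : 2 ≤ n := by omega
  have hv1 : (1 : ZMod n).val = 1 := ZMod.val_one'' (by omega)
  have hjlt : j.val < n := ZMod.val_lt j
  rw [hv1] at h1
  by_cases hc : j.val + 1 < n
  · rw [Nat.mod_eq_of_lt hc] at h1
    omega
  · have : j.val + 1 = n := by omega
    rw [this, Nat.mod_self] at h1
    omega

end PCDigraph

open PCDigraph

/-- Every Hamiltonian digraph of even order at least `4` has proper connection
number at most `2`. -/
theorem pc_le_two_of_hamiltonian_even_order {V : Type*} [Fintype V]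
    (Adj : V → V → Prop) (hloopless : ∀ v : V, ¬ Adj v v)
    (hham : Hamiltonian Adj) (heven : Even (Fintype.card V))
    (hcard : 4 ≤ Fintype.card V) :
    pc Adj ≤ 2 := by
  haveI : NeZero (Fintype.card V) := ⟨by omega⟩
  obtain ⟨x, hxbij, hxadj⟩ := hham
  set e : ZMod (Fintype.card V) ≃ V := Equiv.ofBijective x hxbij with he
  set c : V → V → ℕ := fun u _ => if (e.symm u).val % 2 = 0 then 1 else 2 with hc
  have hmem : 2 ∈ {k : ℕ | ∃ c : V → V → ℕ, IsPCColouring Adj k c} := by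
    refine ⟨c, ?_, ?_⟩
    · intro u v _
      simp only [hc]
      split_ifs <;> simp
    · intro u v huv
      set i : ZMod (Fintype.card V) := e.symm u with hi
      set j : ZMod (Fintype.card V) := e.symm v with hj
      have hxi : x i = u := e.apply_symm_apply u
      have hxj : x j = v := e.apply_symm_apply v
      have hij : i ≠ j := fun h => huv (by rw [← hxi, ← hxj, h])
      set k : ℕ := (j - i).val with hk
      have hkn : k < Fintype.card V := ZMod.val_lt (j - i)
      obtain ⟨p, hps, hpa⟩ := exists_cycWalk x hxadj k i
      have hend : i + (k : ZMod (Fintype.card V)) = j := by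
        rw [hk, ZMod.natCast_val, ZMod.cast_id]; ring
      rw [← hxi, ← hxj, ← hend]
      refine ⟨p, ?_, ?_⟩
      · rw [DWalk.IsPath, hps]
        refine List.Nodup.map_on ?_ List.nodup_range
        intro t1 ht1 t2 ht2 hxeq
        have ht1' : t1 < Fintype.card V := by
          have := List.mem_range.mp ht1; omega
        have ht2' : t2 < Fintype.card V := by
          have := List.mem_range.mp ht2; omega
        have h2 : (t1 : ZMod (Fintype.card V)) = (t2 : ZMod (Fintype.card V)) :=
          add_left_cancel (hxbij.injective hxeq)
        have := congrArg ZMod.val h2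
        rwa [ZMod.val_cast_of_lt ht1', ZMod.val_cast_of_lt ht2'] at this
      · rw [ProperlyColoured, hpa]
        rw [List.map_map]
        have hfun : (Function.comp (fun e_1 : V × V => c e_1.1 e_1.2)
              (fun t : ℕ => (x (i + (t : ZMod (Fintype.card V))), x (i + (t : ZMod (Fintype.card V)) + 1))))
              = (fun t : ℕ => if (i + (t : ZMod (Fintype.card V))).val % 2 = 0 then 1 else 2) := by
          funext t
          have hsymm : e.symm (x (i + (t : ZMod (Fintype.card V)))) = i + (t : ZMod (Fintype.card V)) := by
            rw [he]; exact Equiv.symm_apply_apply _ _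
          simp only [Function.comp_apply, hc, hsymm]
        rw [hfun]
        rcases k with _ | k'
        · simp; exact List.isChain_nil
        · unfold List.Chain'; rw [List.isChain_map, List.isChain_range_succ]
          intro m _
          have hflip := parity_flip heven (i + (m : ZMod (Fintype.card V)))
          have harg : i + ((m + 1 : ℕ) : ZMod (Fintype.card V)) = i + (m : ZMod (Fintype.card V)) + 1 := by
            push_cast; ring
          rw [harg]
          split_ifs with h1 h2 h2 <;> omega
  exact Nat.sInf_le hmem
end
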